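/- arXiv:math/0607467 — 5 statements merged into one kernel-verified Lean document; each statement's English description precedes it below -/
import Mathlib

section
/- Let Γ be a countable group and μ a probability measure on Γ whose support generates Γ, such that the associated random walk is transient. If the entropy H(μ) = −Σ_{x∈Γ} μ(x) ln μ(x) is finite, then the first moment of μ in the Green metric is finite; more precisely, Σ_{x∈Γ} μ(x) · d_G(e, x) ≤ H(μ) < ∞. -/
open MeasureTheory ProbabilityTheory Filter
open scoped ENNReal

noncomputable section

variable {Γ Ω : Type*}

/-- Position at time `n` of the random walk started at `x` with i.i.d. increments
`X 0, X 1, …` : `Z_n = x * X_0 * X_1 * ⋯ * X_{n-1}` (ordered product). -/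
def walk [Group Γ] (x : Γ) (X : ℕ → Ω → Γ) (n : ℕ) (ω : Ω) : Γ :=
  x * ((List.range n).map fun k => X k ω).prod

/-- Hitting probability `F(x,y) = ℙ^x[∃ n ≥ 0, Z_n = y]`. -/
def hitProb [Group Γ] [MeasurableSpace Ω] (P : Measure Ω) (X : ℕ → Ω → Γ) (x y : Γ) : ℝ≥0∞ :=
  P {ω | ∃ n : ℕ, walk x X n ω = y}

/-- Green metric `d_G(x,y) = -ln F(x,y)`. -/
def greenDist [Group Γ] [MeasurableSpace Ω] (P : Measure Ω) (X : ℕ → Ω → Γ) (x y : Γ) : ℝ :=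
  - Real.log (hitProb P X x y).toReal

/-- Green function `G(x,y) = Σ_{n≥0} ℙ^x[Z_n = y]`. -/
def greenFn [Group Γ] [MeasurableSpace Ω] (P : Measure Ω) (X : ℕ → Ω → Γ) (x y : Γ) : ℝ≥0∞ :=
  ∑' n : ℕ, P {ω | walk x X n ω = y}

/-- Martin kernel `K(x,y) = G(x,y)/G(e,y)` (real-valued; `G` is finite by transience). -/
def martinK [Group Γ] [MeasurableSpace Ω] (P : Measure Ω) (X : ℕ → Ω → Γ) (x y : Γ) : ℝ :=
  (greenFn P X x y).toReal / (greenFn P X 1 y).toReal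

/-- Word ball of radius `n` for the generating set `S` : elements expressible as a
product of at most `n` generators. -/
def wordBall [Group Γ] (S : Finset Γ) (n : ℕ) : Set Γ :=
  {x | ∃ l : List Γ, l.length ≤ n ∧ (∀ g ∈ l, g ∈ (S : Set Γ)) ∧ l.prod = x}

/-- Finite entropy implies finite first moment in the Green metric;
more precisely `Σ_x μ(x) d_G(e,x) ≤ H(μ) < ∞`. -/
theorem greenDist_first_moment_le_entropy
    [Group Γ] [Countable Γ] [MeasurableSpace Γ] [MeasurableSingletonClass Γ]
    [MeasurableSpace Ω] (P : Measure Ω) [IsProbabilityMeasure P]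
    (μ : Measure Γ) [IsProbabilityMeasure μ]
    (X : ℕ → Ω → Γ) (hmeas : ∀ k, Measurable (X k))
    (hiid : iIndepFun X P)
    (hlaw : ∀ k, Measure.map (X k) P = μ)
    (hgen : Subgroup.closure {g : Γ | μ {g} ≠ 0} = ⊤)
    (htrans : P {ω | ∃ n ≥ 1, walk 1 X n ω = 1} < 1)
    (hent : Summable fun g : Γ => Real.negMulLog (μ {g}).toReal) :
    Summable (fun g : Γ => (μ {g}).toReal * greenDist P X 1 g) ∧
      ∑' g : Γ, (μ {g}).toReal * greenDist P X 1 g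
        ≤ ∑' g : Γ, Real.negMulLog (μ {g}).toReal := by

  -- Key bound: `μ {g} ≤ hitProb P X 1 g` (hitting at time 1).
  have key : ∀ g : Γ, (μ {g}) ≤ hitProb P X 1 g := by
    intro g
    have h1 : {ω | X 0 ω = g} ⊆ {ω | ∃ n : ℕ, walk 1 X n ω = g} := by
      intro ω hω
      exact ⟨1, by simp [walk, List.range_succ, hω.symm]⟩
    calc μ {g} = P (X 0 ⁻¹' {g}) := by
          rw [← hlaw 0, Measure.map_apply (hmeas 0) (measurableSet_singleton g)]
      _ ≤ hitProb P X 1 g := measure_mono h1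
  have hF_le_one : ∀ g : Γ, hitProb P X 1 g ≤ 1 := fun g => prob_le_one
  have hF_ne_top : ∀ g : Γ, hitProb P X 1 g ≠ ⊤ := fun g =>
    ne_top_of_le_ne_top ENNReal.one_ne_top (hF_le_one g)
  -- nonnegativity and termwise bound
  have hnonneg : ∀ g : Γ, 0 ≤ (μ {g}).toReal * greenDist P X 1 g := by
    intro g
    apply mul_nonneg ENNReal.toReal_nonneg
    have : Real.log (hitProb P X 1 g).toReal ≤ 0 := by
      apply Real.log_nonpos ENNReal.toReal_nonneg
      exact (ENNReal.toReal_le_toReal (hF_ne_top g) ENNReal.one_ne_top).2 (hF_le_one g) |>.trans_eq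
        (by simp) |>.trans_eq rfl
    simpa [greenDist] using neg_nonneg.2 this
  have hle : ∀ g : Γ, (μ {g}).toReal * greenDist P X 1 g
      ≤ Real.negMulLog (μ {g}).toReal := by
    intro g
    rcases eq_or_ne (μ {g}) 0 with h0 | h0
    · simp [h0, Real.negMulLog]
    · have hpos : 0 < (μ {g}).toReal :=
        ENNReal.toReal_pos h0 (measure_ne_top μ _)
      have hμle : (μ {g}).toReal ≤ (hitProb P X 1 g).toReal :=
        ENNReal.toReal_mono (hF_ne_top g) (key g)
      have hlog : Real.log (μ {g}).toReal ≤ Real.log (hitProb P X 1 g).toReal :=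
        Real.log_le_log hpos hμle
      have : greenDist P X 1 g ≤ - Real.log (μ {g}).toReal := by
        simp only [greenDist]; linarith
      have := mul_le_mul_of_nonneg_left this (le_of_lt hpos)
      simpa [Real.negMulLog, mul_comm] using this
  have hsum : Summable (fun g : Γ => (μ {g}).toReal * greenDist P X 1 g) :=
    Summable.of_nonneg_of_le hnonneg hle hent
  exact ⟨hsum, Summable.tsum_le_tsum hle hsum hent⟩
end
end

section
/- Let Γ be a countable group and μ a probability measure on Γ whose support generates Γ, with finite entropy H(μ), such that the associated random walk is transient. Then the Green speed is bounded above by the asymptotic entropy: ℓ_G ≤ h. -/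
open MeasureTheory ProbabilityTheory Filter
open scoped ENNReal

noncomputable section

variable {Γ Ω : Type*}

lemma walk_succ [Group Γ] (x : Γ) (X : ℕ → Ω → Γ) (n : ℕ) (ω : Ω) :
    walk x X (n + 1) ω = walk x X n ω * X n ω := by
  simp [walk, List.range_succ, mul_assoc]

lemma measurable_walk [Group Γ] [Countable Γ] [MeasurableSpace Γ]
    [MeasurableSingletonClass Γ] [MeasurableSpace Ω]
    (x : Γ) (X : ℕ → Ω → Γ) (hmeas : ∀ k, Measurable (X k)) (n : ℕ) :
    Measurable (walk x X n) := by
  haveI : MeasurableMul₂ Γ := ⟨measurable_of_countable _⟩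
  induction n with
  | zero =>
      have : walk x X 0 = fun _ => x := by funext ω; simp [walk]
      rw [this]; exact measurable_const
  | succ n ih =>
      have : walk x X (n + 1) = fun ω => walk x X n ω * X n ω := by
        funext ω; exact walk_succ x X n ω
      rw [this]
      exact ih.mul (hmeas n)

/-- The Green speed is bounded above by the asymptotic entropy:
`ℓ_G ≤ h`. -/
theorem green_speed_le_asymptotic_entropy
    [Group Γ] [Countable Γ] [MeasurableSpace Γ] [MeasurableSingletonClass Γ]
    [MeasurableSpace Ω] (P : Measure Ω) [IsProbabilityMeasure P]
    (μ : Measure Γ) [IsProbabilityMeasure μ]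
    (X : ℕ → Ω → Γ) (hmeas : ∀ k, Measurable (X k))
    (hiid : iIndepFun X P)
    (hlaw : ∀ k, Measure.map (X k) P = μ)
    (hgen : Subgroup.closure {g : Γ | μ {g} ≠ 0} = ⊤)
    (hent : Summable fun g : Γ => Real.negMulLog (μ {g}).toReal)
    (htrans : P {ω | ∃ n ≥ 1, walk 1 X n ω = 1} < 1) :
    ∀ lG h : ℝ,
      (∀ᵐ ω ∂P, Tendsto (fun n : ℕ => greenDist P X 1 (walk 1 X n ω) / n)
        atTop (nhds lG)) →
      (∀ᵐ ω ∂P, Tendsto (fun n : ℕ =>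
          (- Real.log ((Measure.map (walk 1 X n) P) {walk 1 X n ω}).toReal) / n)
        atTop (nhds h)) →
      lG ≤ h := by
  intro lG h h1 h2
  -- a.e., for every n the point mass of the law of the walk at the current point is nonzero
  have hpos : ∀ᵐ ω ∂P, ∀ n : ℕ,
      (Measure.map (walk 1 X n) P) {walk 1 X n ω} ≠ 0 := by
    rw [MeasureTheory.ae_all_iff]
    intro n
    set ν := Measure.map (walk 1 X n) P with hν
    have hw := measurable_walk (1 : Γ) X hmeas n
    have hS : ν {y : Γ | ν {y} = 0} = 0 := by
      have : {y : Γ | ν {y} = 0} = ⋃ y ∈ {y : Γ | ν {y} = 0}, {y} :=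
        (Set.biUnion_of_singleton _).symm
      rw [this, (measure_biUnion_null_iff (Set.to_countable _))]
      intro y hy; exact hy
    have : P {ω | ¬ ν {walk 1 X n ω} ≠ 0} = 0 := by
      have hset : {ω | ¬ ν {walk 1 X n ω} ≠ 0}
          = walk 1 X n ⁻¹' {y : Γ | ν {y} = 0} := by
        ext ω; simp [Set.preimage, not_not]
      rw [hset, ← Measure.map_apply hw ((Set.to_countable _).measurableSet), ← hν, hS]
    exact this
  have hne : (ae P).NeBot := ae_neBot.2 (IsProbabilityMeasure.ne_zero P)
  obtain ⟨ω, ⟨hω1, hω2⟩, hω3⟩ := ((h1.and h2).and hpos).exists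
  refine le_of_tendsto_of_tendsto' hω1 hω2 ?_
  intro n
  rcases Nat.eq_zero_or_pos n with hn | hn
  · simp [hn]
  · set y := walk 1 X n ω with hy
    have hnum : greenDist P X 1 y
        ≤ - Real.log ((Measure.map (walk 1 X n) P) {y}).toReal := by
      have ha : ((Measure.map (walk 1 X n) P) {y}).toReal > 0 :=
        ENNReal.toReal_pos (hω3 n) (measure_ne_top _ _)
      have hab : ((Measure.map (walk 1 X n) P) {y}).toReal
          ≤ (hitProb P X 1 y).toReal := by
        refine ENNReal.toReal_mono (measure_ne_top _ _) ?_
        rw [Measure.map_apply (measurable_walk 1 X hmeas n) (measurableSet_singleton y)]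
        exact measure_mono fun ω' hω' => ⟨n, hω'⟩
      have := Real.log_le_log ha hab
      unfold greenDist
      linarith
    have hn' : (0:ℝ) < (n:ℝ) := by exact_mod_cast hn
    exact div_le_div_of_nonneg_right hnum hn'.le
end
end

section
/- Let Γ be a countable group, μ a probability measure on Γ whose support generates Γ, and d(·,·) a left-invariant metric on Γ. Suppose that: the entropy H(μ) is finite; μ has finite first moment with respect to d, i.e. Σ_{x∈Γ} μ(x) d(e, x) < ∞; and the logarithmic volume growth v = limsup_{n→∞} ln(#{x ∈ Γ : d(e,x) ≤ n})/n is finite. Then the asymptotic entropy h, the rate of escape ℓ = lim_n d(e, Z_n)/n (a.s. and L¹ limit), and v satisfy the fundamental inequality h ≤ ℓ · v. -/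
open MeasureTheory ProbabilityTheory Filter
open scoped ENNReal

noncomputable section

variable {Γ Ω : Type*}

/-- the fundamental inequality `h ≤ ℓ · v` for any left-invariant
metric `d` with finite first moment, assuming finite entropy and finite
logarithmic volume growth `v`. -/
theorem fundamental_inequality
    [Group Γ] [Countable Γ] [MeasurableSpace Γ] [MeasurableSingletonClass Γ]
    [MeasurableSpace Ω] (P : Measure Ω) [IsProbabilityMeasure P]
    (μ : Measure Γ) [IsProbabilityMeasure μ]
    (X : ℕ → Ω → Γ) (hmeas : ∀ k, Measurable (X k))
    (hiid : iIndepFun X P)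
    (hlaw : ∀ k, Measure.map (X k) P = μ)
    (hgen : Subgroup.closure {g : Γ | μ {g} ≠ 0} = ⊤)
    (d : Γ → Γ → ℝ)
    (hd0 : ∀ x y, 0 ≤ d x y) (hdiag : ∀ x, d x x = 0)
    (hsep : ∀ x y, d x y = 0 → d y x = 0 → x = y)
    (htri : ∀ x y z, d x z ≤ d x y + d y z)
    (hinv : ∀ g x y, d (g * x) (g * y) = d x y)
    (hent : Summable fun g : Γ => Real.negMulLog (μ {g}).toReal)
    (hmom : Summable fun g : Γ => (μ {g}).toReal * d 1 g)
    (hballfin : ∀ n : ℕ, {x : Γ | d 1 x ≤ (n : ℝ)}.Finite)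
    (v : ℝ)
    (hbdd : IsBoundedUnder (· ≤ ·) atTop
      (fun n : ℕ => Real.log (Nat.card {x : Γ | d 1 x ≤ (n : ℝ)}) / n))
    (hv : Filter.limsup
      (fun n : ℕ => Real.log (Nat.card {x : Γ | d 1 x ≤ (n : ℝ)}) / n) atTop = v) :
    ∀ l h : ℝ,
      (∀ᵐ ω ∂P, Tendsto (fun n : ℕ => d 1 (walk 1 X n ω) / n) atTop (nhds l)) →
      (∀ᵐ ω ∂P, Tendsto (fun n : ℕ =>
          (- Real.log ((Measure.map (walk 1 X n) P) {walk 1 X n ω}).toReal) / n)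
        atTop (nhds h)) →
      h ≤ l * v := by
  classical
  intro l h hl hh
  -- measurability of the walk
  have hZ : ∀ n, Measurable (walk (1 : Γ) X n) := by
    intro n
    induction n with
    | zero =>
        have : walk (1 : Γ) X 0 = fun _ => (1 : Γ) := by
          funext ω; simp [walk]
        rw [this]; exact measurable_const
    | succ n ih =>
        have : walk (1 : Γ) X (n + 1) = fun ω => walk 1 X n ω * X n ω := by
          funext ω; simp [walk, List.range_succ, mul_assoc]
        rw [this]
        exact (Measurable.of_discrete (f := fun p : Γ × Γ => p.1 * p.2)).comp (ih.prodMk (hmeas n))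
  haveI hPne : (ae P).NeBot := ae_neBot.mpr (IsProbabilityMeasure.ne_zero (μ := P))
  -- l ≥ 0
  have hl0 : 0 ≤ l := by
    obtain ⟨ω₀, hω₀⟩ := hl.exists
    exact ge_of_tendsto' hω₀ fun n => div_nonneg (hd0 _ _) (Nat.cast_nonneg n)
  -- ball cardinalities
  set c : ℕ → ℕ := fun k => Nat.card {x : Γ | d 1 x ≤ (k : ℝ)} with hc
  have hcpos : ∀ k : ℕ, 0 < c k := by
    intro k
    have hfin : Finite ({x : Γ | d 1 x ≤ (k : ℝ)} : Set Γ) := (hballfin k).to_subtype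
    have hne : Nonempty ({x : Γ | d 1 x ≤ (k : ℝ)} : Set Γ) :=
      ⟨⟨1, by simp [hdiag 1, Nat.cast_nonneg]⟩⟩
    exact Nat.card_pos
  -- v ≥ 0
  have hv0 : 0 ≤ v := by
    rw [← hv]
    refine le_limsup_of_frequently_le (Frequently.of_forall fun k => ?_) hbdd
    exact div_nonneg (Real.log_nonneg (by exact_mod_cast hcpos k)) (Nat.cast_nonneg k)
  -- key claim for every ε > 0
  have key : ∀ ε : ℝ, 0 < ε → h ≤ (v + ε) * (l + ε) + ε := by
    intro ε hε
    by_contra hcon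
    push_neg at hcon
    have hδ : 0 < (h - ε) - (v + ε) * (l + ε) := by linarith
    set δ := (h - ε) - (v + ε) * (l + ε) with hδdef
    have hlε : 0 < l + ε := by linarith
    have hvε : 0 < v + ε := by linarith
    -- volume growth bound
    have hev1 : ∀ᶠ k : ℕ in atTop, Real.log (c k) / k < v + ε :=
      eventually_lt_of_limsup_lt (by rw [hv]; linarith) hbdd
    obtain ⟨K, hK⟩ := (hev1.and (eventually_ge_atTop 1)).exists_forall_of_atTop
    have hvol : ∀ k, K ≤ k → Real.log (c k) ≤ (v + ε) * k := by
      intro k hk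
      obtain ⟨h1, h2⟩ := hK k hk
      have hkpos : (0 : ℝ) < k := by exact_mod_cast h2
      have := (div_lt_iff₀ hkpos).mp h1
      linarith
    -- the good sets
    set S : ℕ → Set Γ := fun n =>
      {x | d 1 x ≤ (l + ε) * n ∧
        ((Measure.map (walk 1 X n) P) {x}).toReal ≤ Real.exp (-(h - ε) * n)} with hS
    set A : ℕ → Set Ω := fun n => walk 1 X n ⁻¹' S n with hA
    have hAmeas : ∀ n, MeasurableSet (A n) := fun n => (hZ n) .of_discrete
    -- a.s. eventually in A n
    have hae : ∀ᵐ ω ∂P, ∀ᶠ n : ℕ in atTop, ω ∈ A n := by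
      filter_upwards [hl, hh] with ω h1 h2
      have e1 : ∀ᶠ n : ℕ in atTop, d 1 (walk 1 X n ω) / n ≤ l + ε :=
        h1.eventually_le_const (by linarith)
      have e2 : ∀ᶠ n : ℕ in atTop,
          h - ε ≤ (- Real.log ((Measure.map (walk 1 X n) P) {walk 1 X n ω}).toReal) / n :=
        h2.eventually_const_le (by linarith)
      filter_upwards [e1, e2, eventually_ge_atTop 1] with n hn1 hn2 hn3
      have hnpos : (0 : ℝ) < n := by exact_mod_cast hn3
      refine ⟨(div_le_iff₀ hnpos).mp hn1, ?_⟩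
      set p := ((Measure.map (walk 1 X n) P) {walk 1 X n ω}).toReal with hp
      have hp0 : 0 ≤ p := ENNReal.toReal_nonneg
      rcases eq_or_lt_of_le hp0 with hp0' | hp0'
      · rw [← hp0']; positivity
      · have hlog : Real.log p ≤ -(h - ε) * n := by
          have := (le_div_iff₀ hnpos).mp hn2
          linarith
        calc p = Real.exp (Real.log p) := (Real.exp_log hp0').symm
          _ ≤ Real.exp (-(h - ε) * n) := Real.exp_le_exp.mpr hlog
    -- from a.s. eventually, get a uniform lower bound 1/2 on P (A n) for large n
    set C : ℕ → Set Ω := fun N => ⋂ n ∈ Set.Ici N, A n with hC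
    have hCmeas : ∀ N, MeasurableSet (C N) :=
      fun N => MeasurableSet.biInter (Set.to_countable _) fun n _ => hAmeas n
    have hCmono : Monotone C := by
      intro a b hab
      exact Set.biInter_subset_biInter_left (Set.Ici_subset_Ici.mpr hab)
    have hCunion : P (⋃ N, C N) = 1 := by
      have hsub : ∀ᵐ ω ∂P, ω ∈ ⋃ N, C N := by
        filter_upwards [hae] with ω hω
        obtain ⟨N, hN⟩ := eventually_atTop.mp hω
        exact Set.mem_iUnion.mpr ⟨N, Set.mem_biInter fun n hn => hN n hn⟩
      have hUmeas : MeasurableSet (⋃ N, C N) := MeasurableSet.iUnion hCmeas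
      exact (prob_compl_eq_zero_iff hUmeas).mp
        (measure_eq_zero_iff_ae_notMem.mpr (hsub.mono fun ω hω hmem => hmem hω))
    have hCsup : (⨆ N, P (C N)) = 1 := by
      rw [← hCmono.directed_le.measure_iUnion, hCunion]
    have hhalf : ∃ N₁, (1 : ℝ≥0∞) / 2 ≤ P (C N₁) := by
      have : (1 : ℝ≥0∞) / 2 < ⨆ N, P (C N) := by
        rw [hCsup]; exact ENNReal.half_lt_self one_ne_zero ENNReal.one_ne_top
      obtain ⟨N₁, hN₁⟩ := lt_iSup_iff.mp this
      exact ⟨N₁, hN₁.le⟩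
    obtain ⟨N₁, hN₁⟩ := hhalf
    have hPA : ∀ n, N₁ ≤ n → (1 : ℝ≥0∞) / 2 ≤ P (A n) := by
      intro n hn
      refine le_trans hN₁ (measure_mono ?_)
      exact Set.biInter_subset_of_mem hn
    -- counting bound for large n
    have hmK : ∀ᶠ n : ℕ in atTop, K ≤ ⌈(l + ε) * n⌉₊ := by
      have ht : Tendsto (fun n : ℕ => (l + ε) * n) atTop atTop :=
        (tendsto_natCast_atTop_atTop).const_mul_atTop hlε
      filter_upwards [ht.eventually_ge_atTop (K : ℝ)] with n hn
      exact_mod_cast hn.trans (Nat.le_ceil _)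
    have hmain : ∀ᶠ n : ℕ in atTop, δ * n ≤ (v + ε) + Real.log 2 := by
      filter_upwards [hmK, eventually_ge_atTop (max N₁ 1)] with n hn hn'
      have hnN₁ : N₁ ≤ n := le_trans (le_max_left _ _) hn'
      have hn1 : 1 ≤ n := le_trans (le_max_right _ _) hn'
      have hnpos : (0 : ℝ) < n := by exact_mod_cast hn1
      set m := ⌈(l + ε) * n⌉₊ with hm
      -- S n is contained in the ball of radius m
      have hSsub : S n ⊆ {x : Γ | d 1 x ≤ (m : ℝ)} := by
        intro x hx
        exact le_trans hx.1 (Nat.le_ceil _)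
      have hSfin : (S n).Finite := (hballfin m).subset hSsub
      -- measure bound
      have hmap : P (A n) = (Measure.map (walk 1 X n) P) (S n) :=
        (Measure.map_apply (hZ n) .of_discrete).symm
      set ν := Measure.map (walk 1 X n) P with hν
      have hbound : ν (S n) ≤ (c m : ℝ≥0∞) * ENNReal.ofReal (Real.exp (-(h - ε) * n)) := by
        have h1 : ν (S n) ≤ ∑ x ∈ hSfin.toFinset, ν {x} := by
          have hcov : S n ⊆ ⋃ x ∈ hSfin.toFinset, {x} := by
            intro x hx
            exact Set.mem_biUnion (hSfin.mem_toFinset.mpr hx) rfl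
          exact le_trans (measure_mono hcov) (measure_biUnion_finset_le _ _)
        have h2 : ∀ x ∈ hSfin.toFinset, ν {x} ≤ ENNReal.ofReal (Real.exp (-(h - ε) * n)) := by
          intro x hx
          rw [Set.Finite.mem_toFinset] at hx
          have hxle : (ν {x}).toReal ≤ Real.exp (-(h - ε) * n) := hx.2
          have hne : ν {x} ≠ ⊤ := by
            haveI : IsProbabilityMeasure ν := Measure.isProbabilityMeasure_map (hZ n).aemeasurable
            exact measure_ne_top ν _
          calc ν {x} = ENNReal.ofReal (ν {x}).toReal := (ENNReal.ofReal_toReal hne).symm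
            _ ≤ ENNReal.ofReal (Real.exp (-(h - ε) * n)) := ENNReal.ofReal_le_ofReal hxle
        have h3 : ∑ x ∈ hSfin.toFinset, ν {x} ≤
            (hSfin.toFinset.card : ℝ≥0∞) * ENNReal.ofReal (Real.exp (-(h - ε) * n)) := by
          calc ∑ x ∈ hSfin.toFinset, ν {x}
              ≤ ∑ _x ∈ hSfin.toFinset, ENNReal.ofReal (Real.exp (-(h - ε) * n)) :=
                Finset.sum_le_sum h2
            _ = (hSfin.toFinset.card : ℝ≥0∞) * ENNReal.ofReal (Real.exp (-(h - ε) * n)) := by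
                rw [Finset.sum_const, nsmul_eq_mul]
        have hcard : hSfin.toFinset.card ≤ c m := by
          have hsubF : hSfin.toFinset ⊆ (hballfin m).toFinset := by
            intro x hx
            rw [Set.Finite.mem_toFinset] at *
            exact hSsub hx
          have := Finset.card_le_card hsubF
          rwa [← Set.ncard_eq_toFinset_card _ (hballfin m), ← Nat.card_coe_set_eq] at this
        refine le_trans (le_trans h1 h3) ?_
        exact mul_le_mul_left (by exact_mod_cast hcard) _
      -- turn into a real inequality
      have hreal : (1 : ℝ) / 2 ≤ (c m : ℝ) * Real.exp (-(h - ε) * n) := by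
        have h4 : (1 : ℝ≥0∞) / 2 ≤ (c m : ℝ≥0∞) * ENNReal.ofReal (Real.exp (-(h - ε) * n)) :=
          le_trans (hPA n hnN₁) (le_trans (le_of_eq hmap) hbound)
        have h5 : (c m : ℝ≥0∞) * ENNReal.ofReal (Real.exp (-(h - ε) * n)) =
            ENNReal.ofReal ((c m : ℝ) * Real.exp (-(h - ε) * n)) := by
          rw [ENNReal.ofReal_mul (by positivity)]
          congr 1
          exact (ENNReal.ofReal_natCast _).symm
        rw [h5] at h4
        have h6 : (1 : ℝ≥0∞) / 2 = ENNReal.ofReal ((1 : ℝ) / 2) := by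
          rw [ENNReal.ofReal_div_of_pos (by norm_num)]
          norm_num
        rw [h6] at h4
        exact (ENNReal.ofReal_le_ofReal_iff (by positivity)).mp h4
      -- take logs
      have hcmpos : (0 : ℝ) < (c m : ℝ) := by exact_mod_cast hcpos m
      have hlog : Real.log ((1 : ℝ) / 2) ≤ Real.log (c m) + (-(h - ε) * n) := by
        have := Real.log_le_log (by norm_num) hreal
        rwa [Real.log_mul (ne_of_gt hcmpos) (Real.exp_ne_zero _), Real.log_exp] at this
      have hlog2 : Real.log ((1 : ℝ) / 2) = - Real.log 2 := by
        rw [Real.log_div one_ne_zero (by norm_num), Real.log_one]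
        ring
      -- volume bound
      have hvolm : Real.log (c m) ≤ (v + ε) * m := hvol m hn
      have hmle : (m : ℝ) ≤ (l + ε) * n + 1 := by
        have := Nat.ceil_lt_add_one (a := (l + ε) * n) (by positivity)
        linarith
      have : Real.log (c m) ≤ (v + ε) * ((l + ε) * n + 1) :=
        hvolm.trans (by nlinarith)
      -- combine
      rw [hlog2] at hlog
      have : - Real.log 2 ≤ (v + ε) * ((l + ε) * n + 1) + (-(h - ε) * n) := by linarith
      have hexp : δ * n = (h - ε) * n - (v + ε) * ((l + ε) * n) := by
        rw [hδdef]; ring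
      nlinarith [this, hexp]
    -- contradiction with δ > 0
    have hδtop : Tendsto (fun n : ℕ => δ * n) atTop atTop :=
      (tendsto_natCast_atTop_atTop).const_mul_atTop hδ
    obtain ⟨n, hn1, hn2⟩ :=
      ((hδtop.eventually_gt_atTop ((v + ε) + Real.log 2)).and hmain).exists
    exact absurd hn2 (not_le.mpr hn1)
  -- pass to the limit ε → 0⁺
  have hcont : Tendsto (fun ε : ℝ => (v + ε) * (l + ε) + ε) (nhdsWithin 0 (Set.Ioi 0))
      (nhds (l * v)) := by
    have h1 : ContinuousAt (fun ε : ℝ => (v + ε) * (l + ε) + ε) 0 := by fun_prop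
    have h2 : Tendsto (fun ε : ℝ => (v + ε) * (l + ε) + ε) (nhdsWithin 0 (Set.Ioi 0))
        (nhds ((v + 0) * (l + 0) + 0)) :=
      h1.tendsto.mono_left nhdsWithin_le_nhds
    simpa [mul_comm] using h2
  exact ge_of_tendsto hcont (eventually_nhdsWithin_of_forall fun ε hε => key ε hε)
end
end

section
/- Let Γ be a countable group and μ a probability measure on Γ whose support generates Γ, such that the associated random walk is transient. Let X̃₁ be a random variable with law μ̃ (where μ̃(x) = μ(x⁻¹)), independent of the random walk (Z_n) started at e. Then for every a > 0, ℙ ⊗ ℙ̃[ sup_{n≥0} K(X̃₁, Z_n) ≥ a ] ≤ 1/a, where K(x, y) = G(x, y)/G(e, y) is the Martin kernel. -/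
open MeasureTheory ProbabilityTheory Filter
open scoped ENNReal
set_option linter.unusedSectionVars false
set_option linter.unnecessarySimpa false
set_option maxHeartbeats 1000000

noncomputable section

variable {Γ Ω : Type*}

namespace MKMI

variable [Group Γ] [Countable Γ] [MeasurableSpace Γ] [MeasurableSingletonClass Γ]
  [MeasurableSpace Ω]

lemma allMeas (S : Set Γ) : MeasurableSet S := S.to_countable.measurableSet

lemma measMulComp {α : Type*} [MeasurableSpace α] {f g : α → Γ} (hf : Measurable f)
    (hg : Measurable g) : Measurable fun a => f a * g a := by
  refine measurable_to_countable' fun z => ?_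
  have h : (fun a => f a * g a) ⁻¹' {z} = ⋃ p : Γ, f ⁻¹' {p} ∩ g ⁻¹' {p⁻¹ * z} := by
    ext a
    simp only [Set.mem_preimage, Set.mem_singleton_iff, Set.mem_iUnion, Set.mem_inter_iff]
    constructor
    · intro h; exact ⟨f a, rfl, by rw [← h, inv_mul_cancel_left]⟩
    · rintro ⟨p, hp, hq⟩; rw [hp, hq, mul_inv_cancel_left]
  rw [h]
  exact MeasurableSet.iUnion fun p =>
    (hf (measurableSet_singleton _)).inter (hg (measurableSet_singleton _))

/-- ordered product of the first `n` values of `f` -/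
def pp (f : ℕ → Γ) (n : ℕ) : Γ := ((List.range n).map f).prod

lemma pp_zero (f : ℕ → Γ) : pp f 0 = 1 := rfl

lemma pp_succ (f : ℕ → Γ) (n : ℕ) : pp f (n + 1) = pp f n * f n := by
  simp [pp, List.range_succ]

lemma pp_add (f : ℕ → Γ) (m j : ℕ) : pp f (m + j) = pp f m * pp (fun k => f (m + k)) j := by
  simp only [pp, List.range_add, List.map_append, List.prod_append, List.map_map]
  rfl

lemma pp_congr {f g : ℕ → Γ} (n : ℕ) (h : ∀ k < n, f k = g k) : pp f n = pp g n := by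
  unfold pp
  congr 1
  exact List.map_congr_left fun k hk => h k (List.mem_range.mp hk)

lemma meas_pp (n : ℕ) : Measurable fun f : ℕ → Γ => pp f n := by
  induction n with
  | zero => simpa [pp_zero] using measurable_const
  | succ n ih =>
      have : (fun f : ℕ → Γ => pp f (n + 1)) = fun f => pp f n * f n := by
        funext f; exact pp_succ f n
      rw [this]
      exact measMulComp ih (measurable_pi_apply n)

variable (X : ℕ → Ω → Γ)

/-- the walk increment product `Z_n` -/
def Zw (n : ℕ) (ω : Ω) : Γ := pp (fun k => X k ω) n

lemma walk_eq (t : Γ) (n : ℕ) (ω : Ω) : walk t X n ω = t * Zw X n ω := rfl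

lemma Zw_zero (ω : Ω) : Zw X 0 ω = 1 := rfl

lemma Zw_split (m j : ℕ) (ω : Ω) :
    Zw X (m + j) ω = Zw X m ω * pp (fun k => X (m + k) ω) j := pp_add _ m j

lemma meas_Zw (hmeas : ∀ k, Measurable (X k)) (n : ℕ) : Measurable (Zw X n) := by
  induction n with
  | zero =>
      have : Zw X 0 = fun _ => (1 : Γ) := rfl
      rw [this]; exact measurable_const
  | succ n ih =>
      have : Zw X (n + 1) = fun ω => Zw X n ω * X n ω := funext fun ω => pp_succ _ n
      rw [this]
      exact measMulComp ih (hmeas n)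

lemma meas_blk (hmeas : ∀ k, Measurable (X k)) (n : ℕ) : ∀ k : ℕ,
    Measurable fun ω => pp (fun i => X (n + i) ω) k := by
  intro k
  induction k with
  | zero =>
      have h0 : (fun ω : Ω => pp (fun i => X (n + i) ω) 0) = fun _ => (1 : Γ) := rfl
      rw [h0]; exact measurable_const
  | succ k ih =>
      have hsucc : (fun ω : Ω => pp (fun i => X (n + i) ω) (k + 1))
          = fun ω => pp (fun i => X (n + i) ω) k * X (n + k) ω := by
        funext ω; exact pp_succ _ k
      rw [hsucc]
      exact measMulComp ih (hmeas (n + k))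

/-- vector of the first `m` increments -/
def vm (m : ℕ) : Ω → (Fin m → Γ) := fun ω i => X i ω

/-- vector of `j` increments starting at `s` -/
def svm (s j : ℕ) : Ω → (Fin j → Γ) := fun ω i => X (s + i) ω

/-- pad a finite vector to a function on `ℕ` -/
def padf (m : ℕ) (v : Fin m → Γ) : ℕ → Γ := fun k => if h : k < m then v ⟨k, h⟩ else 1

lemma bridge0 (m : ℕ) (ω : Ω) {i : ℕ} (hi : i ≤ m) :
    pp (padf m (vm X m ω)) i = Zw X i ω :=
  pp_congr i fun k hk => by simp [padf, vm, dif_pos (lt_of_lt_of_le hk hi)]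

lemma bridgeS (s m : ℕ) (ω : Ω) {i : ℕ} (hi : i ≤ m) :
    pp (padf m (svm X s m ω)) i = pp (fun k => X (s + k) ω) i :=
  pp_congr i fun k hk => by simp [padf, svm, dif_pos (lt_of_lt_of_le hk hi)]


variable {P : Measure Ω} [IsProbabilityMeasure P] {μ : Measure Γ}

lemma law_apply (hmeas : ∀ k, Measurable (X k)) (hlaw : ∀ k, Measure.map (X k) P = μ)
    (k : ℕ) (g : Γ) : P (X k ⁻¹' {g}) = μ {g} := by
  rw [← hlaw k, Measure.map_apply (hmeas k) (measurableSet_singleton g)]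

lemma cyl_prob (hmeas : ∀ k, Measurable (X k))
    (hiid : iIndepFun X P)
    (hlaw : ∀ k, Measure.map (X k) P = μ) (s n : ℕ) (v : Fin n → Γ) :
    P (⋂ i : Fin n, X (s + ↑i) ⁻¹' {v i}) = ∏ i : Fin n, μ {v i} := by
  classical
  set S : Finset ℕ := (Finset.range n).map ⟨fun i => s + i, add_right_injective s⟩ with hS
  set w : ℕ → Γ := fun k => if h : k - s < n ∧ s ≤ k then v ⟨k - s, h.1⟩ else 1 with hwdef
  have hw : ∀ i : Fin n, w (s + ↑i) = v i := by
    intro i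
    have h1 : s + ↑i - s < n ∧ s ≤ s + ↑i := by constructor <;> omega
    have h2 : (⟨s + ↑i - s, h1.1⟩ : Fin n) = i := Fin.ext (by simp only [Fin.val_mk]; omega)
    simp only [hwdef, dif_pos h1, h2]
  have key := hiid.measure_inter_preimage_eq_mul (S := S) (sets := fun k => {w k})
    (fun i _ => measurableSet_singleton _)
  have hLHS : (⋂ i ∈ S, X i ⁻¹' {w i}) = ⋂ i : Fin n, X (s + ↑i) ⁻¹' {v i} := by
    ext ω
    simp only [Set.mem_iInter, hS, Finset.mem_map, Finset.mem_range,
      Function.Embedding.coeFn_mk, Set.mem_preimage, Set.mem_singleton_iff]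
    constructor
    · intro h i
      have := h (s + ↑i) ⟨↑i, i.isLt, rfl⟩
      rwa [hw] at this
    · rintro h k ⟨j, hj, rfl⟩
      have := h ⟨j, hj⟩
      rwa [hw ⟨j, hj⟩]
  have hRHS : (∏ i ∈ S, P (X i ⁻¹' {w i})) = ∏ i : Fin n, μ {v i} := by
    rw [hS, Finset.prod_map]
    simp only [Function.Embedding.coeFn_mk]
    rw [← Fin.prod_univ_eq_prod_range (fun j => P (X (s + j) ⁻¹' {w (s + j)})) n]
    refine Finset.prod_congr rfl fun i _ => ?_
    rw [hw i, law_apply X hmeas hlaw]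
  rw [hLHS] at key
  rw [hRHS] at key
  exact key

lemma vm_fiber_eq (m : ℕ) (u : Fin m → Γ) :
    {ω | vm X m ω = u} = ⋂ i : Fin m, X (0 + ↑i) ⁻¹' {u i} := by
  ext ω
  simp only [Set.mem_setOf_eq, Set.mem_iInter, Set.mem_preimage, Set.mem_singleton_iff,
    zero_add, funext_iff]
  rfl

lemma svm_fiber_eq (s j : ℕ) (v : Fin j → Γ) :
    {ω | svm X s j ω = v} = ⋂ i : Fin j, X (s + ↑i) ⁻¹' {v i} := by
  ext ω
  simp only [Set.mem_setOf_eq, Set.mem_iInter, Set.mem_preimage, Set.mem_singleton_iff,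
    funext_iff]
  rfl

lemma vm_fiber_meas (hmeas : ∀ k, Measurable (X k)) (m : ℕ) (u : Fin m → Γ) :
    MeasurableSet {ω | vm X m ω = u} := by
  rw [vm_fiber_eq]
  exact MeasurableSet.iInter fun i => (hmeas _) (measurableSet_singleton _)

lemma svm_fiber_meas (hmeas : ∀ k, Measurable (X k)) (s j : ℕ) (v : Fin j → Γ) :
    MeasurableSet {ω | svm X s j ω = v} := by
  rw [svm_fiber_eq]
  exact MeasurableSet.iInter fun i => (hmeas _) (measurableSet_singleton _)

lemma vm_fiber_prob (hmeas : ∀ k, Measurable (X k))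
    (hiid : iIndepFun X P)
    (hlaw : ∀ k, Measure.map (X k) P = μ) (m : ℕ) (u : Fin m → Γ) :
    P {ω | vm X m ω = u} = ∏ i : Fin m, μ {u i} := by
  rw [vm_fiber_eq]
  exact cyl_prob X hmeas hiid hlaw 0 m u

lemma svm_fiber_prob (hmeas : ∀ k, Measurable (X k))
    (hiid : iIndepFun X P)
    (hlaw : ∀ k, Measure.map (X k) P = μ) (s j : ℕ) (v : Fin j → Γ) :
    P {ω | svm X s j ω = v} = ∏ i : Fin j, μ {v i} := by
  rw [svm_fiber_eq]
  exact cyl_prob X hmeas hiid hlaw s j v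

lemma pair_fiber_prob (hmeas : ∀ k, Measurable (X k))
    (hiid : iIndepFun X P)
    (hlaw : ∀ k, Measure.map (X k) P = μ) (m j : ℕ) (u : Fin m → Γ) (v : Fin j → Γ) :
    P ({ω | vm X m ω = u} ∩ {ω | svm X m j ω = v})
      = (∏ i : Fin m, μ {u i}) * ∏ i : Fin j, μ {v i} := by
  have hset : {ω | vm X m ω = u} ∩ {ω | svm X m j ω = v}
      = ⋂ k : Fin (m + j), X (0 + ↑k) ⁻¹' {Fin.append u v k} := by
    ext ω
    simp only [Set.mem_inter_iff, Set.mem_setOf_eq, Set.mem_iInter, Set.mem_preimage,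
      Set.mem_singleton_iff, zero_add, funext_iff]
    constructor
    · rintro ⟨h1, h2⟩ k
      refine Fin.addCases (fun i => ?_) (fun i => ?_) k
      · simpa [Fin.append_left, vm] using h1 i
      · simpa [Fin.append_right, svm] using h2 i
    · intro h
      constructor
      · intro i
        have := h (Fin.castAdd j i)
        simpa [Fin.append_left, vm] using this
      · intro i
        have := h (Fin.natAdd m i)
        simpa [Fin.append_right, svm] using this
  rw [hset, cyl_prob X hmeas hiid hlaw 0 (m + j) (Fin.append u v)]
  rw [Fin.prod_univ_add]
  congr 1
  · exact Finset.prod_congr rfl fun i _ => by rw [Fin.append_left]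
  · exact Finset.prod_congr rfl fun i _ => by rw [Fin.append_right]

/-- The master independence lemma: an event determined by the first `m` increments and
an event determined by the next `j` increments are independent, and the second has the
same probability as the corresponding event on the first `j` increments. -/
lemma core (hmeas : ∀ k, Measurable (X k))
    (hiid : iIndepFun X P)
    (hlaw : ∀ k, Measure.map (X k) P = μ) (m j : ℕ)
    (SA : Set (Fin m → Γ)) (SB : Set (Fin j → Γ)) :
    P (vm X m ⁻¹' SA ∩ svm X m j ⁻¹' SB)
      = P (vm X m ⁻¹' SA) * P (vm X j ⁻¹' SB) := by
  classical
  have dA : vm X m ⁻¹' SA = ⋃ u : ↥SA, {ω | vm X m ω = ↑u} := by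
    ext ω
    simp only [Set.mem_preimage, Set.mem_iUnion, Set.mem_setOf_eq]
    exact ⟨fun h => ⟨⟨_, h⟩, rfl⟩, fun ⟨u, hu⟩ => hu ▸ u.2⟩
  have dB0 : vm X j ⁻¹' SB = ⋃ v : ↥SB, {ω | vm X j ω = ↑v} := by
    ext ω
    simp only [Set.mem_preimage, Set.mem_iUnion, Set.mem_setOf_eq]
    exact ⟨fun h => ⟨⟨_, h⟩, rfl⟩, fun ⟨v, hv⟩ => hv ▸ v.2⟩
  have dAB : vm X m ⁻¹' SA ∩ svm X m j ⁻¹' SB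
      = ⋃ p : ↥SA × ↥SB, ({ω | vm X m ω = ↑p.1} ∩ {ω | svm X m j ω = ↑p.2}) := by
    ext ω
    simp only [Set.mem_inter_iff, Set.mem_preimage, Set.mem_iUnion, Set.mem_setOf_eq]
    constructor
    · rintro ⟨h1, h2⟩; exact ⟨⟨⟨_, h1⟩, ⟨_, h2⟩⟩, rfl, rfl⟩
    · rintro ⟨⟨u, v⟩, hu, hv⟩; exact ⟨hu ▸ u.2, hv ▸ v.2⟩
  have disjA : Pairwise (Function.onFun Disjoint fun u : ↥SA => {ω | vm X m ω = ↑u}) := by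
    intro u u' huu'
    refine Set.disjoint_left.mpr fun ω h1 h2 => ?_
    exact huu' (Subtype.ext (h1 ▸ h2 ▸ rfl))
  have disjB0 : Pairwise (Function.onFun Disjoint fun v : ↥SB => {ω | vm X j ω = ↑v}) := by
    intro v v' hvv'
    refine Set.disjoint_left.mpr fun ω h1 h2 => ?_
    exact hvv' (Subtype.ext (h1 ▸ h2 ▸ rfl))
  have disjAB : Pairwise (Function.onFun Disjoint
      fun p : ↥SA × ↥SB => {ω | vm X m ω = ↑p.1} ∩ {ω | svm X m j ω = ↑p.2}) := by
    intro p p' hpp'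
    refine Set.disjoint_left.mpr fun ω h1 h2 => ?_
    refine hpp' (Prod.ext (Subtype.ext ?_) (Subtype.ext ?_))
    · exact h1.1 ▸ h2.1 ▸ rfl
    · exact h1.2 ▸ h2.2 ▸ rfl
  rw [dAB, dA, dB0, measure_iUnion disjAB (fun p =>
      (vm_fiber_meas X hmeas m _).inter (svm_fiber_meas X hmeas m j _)),
    measure_iUnion disjA (fun u => vm_fiber_meas X hmeas m _),
    measure_iUnion disjB0 (fun v => vm_fiber_meas X hmeas j _)]
  calc ∑' p : ↥SA × ↥SB, P ({ω | vm X m ω = ↑p.1} ∩ {ω | svm X m j ω = ↑p.2})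
      = ∑' p : ↥SA × ↥SB,
          (∏ i : Fin m, μ {(↑p.1 : Fin m → Γ) i}) * ∏ i : Fin j, μ {(↑p.2 : Fin j → Γ) i} := by
        refine tsum_congr fun p => ?_
        exact pair_fiber_prob X hmeas hiid hlaw m j _ _
    _ = (∑' u : ↥SA, ∏ i : Fin m, μ {(↑u : Fin m → Γ) i})
          * ∑' v : ↥SB, ∏ i : Fin j, μ {(↑v : Fin j → Γ) i} := by
        rw [ENNReal.tsum_prod (f := fun (u : ↥SA) (v : ↥SB) =>
          (∏ i : Fin m, μ {(↑u : Fin m → Γ) i}) * ∏ i : Fin j, μ {(↑v : Fin j → Γ) i})]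
        simp_rw [ENNReal.tsum_mul_left]
        rw [ENNReal.tsum_mul_right]
    _ = (∑' u : ↥SA, P {ω | vm X m ω = ↑u}) * ∑' v : ↥SB, P {ω | vm X j ω = ↑v} := by
        congr 1
        · exact (tsum_congr fun u => (vm_fiber_prob X hmeas hiid hlaw m _).symm)
        · exact (tsum_congr fun v => (vm_fiber_prob X hmeas hiid hlaw j _).symm)


section Events

variable (R' : Finset Γ)

/-- first-entrance event into `R'` (for the walk started at `t`), entry point `w`, time `m`,
as a condition on the first `m` increments -/
def SEm (t w : Γ) (m : ℕ) : Set (Fin m → Γ) :=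
  {v | (∀ i < m, t * pp (padf m v) i ∉ R') ∧ t * pp (padf m v) m = w}

def Em (t w : Γ) (m : ℕ) : Set Ω := {ω | (∀ i < m, t * Zw X i ω ∉ R') ∧ t * Zw X m ω = w}

def SBpr (j : ℕ) (w z : Γ) : Set (Fin j → Γ) := {v | w * pp (padf j v) j = z}

lemma preB0 (j : ℕ) (w z : Γ) : vm X j ⁻¹' SBpr j w z = {ω | w * Zw X j ω = z} := by
  ext ω
  simp only [Set.mem_preimage, SBpr, Set.mem_setOf_eq]
  rw [bridge0 X j ω le_rfl]

lemma Em_eq (t w : Γ) (m : ℕ) : Em X R' t w m = vm X m ⁻¹' SEm R' t w m := by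
  ext ω
  have hb : ∀ i ≤ m, pp (padf m (vm X m ω)) i = Zw X i ω := fun i hi => bridge0 X m ω hi
  simp only [Em, SEm, Set.mem_setOf_eq, Set.mem_preimage]
  constructor
  · rintro ⟨h1, h2⟩
    exact ⟨fun i hi => by rw [hb i hi.le]; exact h1 i hi, by rw [hb m le_rfl]; exact h2⟩
  · rintro ⟨h1, h2⟩
    refine ⟨fun i hi => ?_, ?_⟩
    · rw [← hb i hi.le]; exact h1 i hi
    · rw [← hb m le_rfl]; exact h2

lemma Em_meas (hmeas : ∀ k, Measurable (X k)) (t w : Γ) (m : ℕ) :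
    MeasurableSet (Em X R' t w m) := by
  have hrw : Em X R' t w m =
      (⋂ i ∈ Finset.range m, ((fun ω => t * Zw X i ω) ⁻¹' (↑R' : Set Γ))ᶜ)
        ∩ ((fun ω => t * Zw X m ω) ⁻¹' {w}) := by
    ext ω
    simp only [Em, Set.mem_setOf_eq, Set.mem_inter_iff, Set.mem_iInter, Finset.mem_range,
      Set.mem_compl_iff, Set.mem_preimage, Set.mem_singleton_iff, Finset.mem_coe]
  rw [hrw]
  have hZ : ∀ i : ℕ, Measurable fun ω => t * Zw X i ω := fun i =>
    measMulComp measurable_const (meas_Zw X hmeas i)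
  exact (MeasurableSet.biInter (Set.to_countable _)
      (fun i _ => ((hZ i) (allMeas _)).compl)).inter ((hZ m) (allMeas _))

lemma Em_disj (t : Γ) : ∀ {m m' : ℕ} {w w' : Γ}, w ∈ R' → w' ∈ R' → (m, w) ≠ (m', w') →
    Disjoint (Em X R' t w m) (Em X R' t w' m') := by
  have aux : ∀ {m m' : ℕ} {w w' : Γ}, w ∈ R' → m < m' →
      Disjoint (Em X R' t w m) (Em X R' t w' m') := by
    intro m m' w w' hw hlt
    refine Set.disjoint_left.mpr fun ω h1 h2 => ?_
    exact h2.1 m hlt (h1.2 ▸ hw)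
  intro m m' w w' hw hw' hne
  rcases Nat.lt_trichotomy m m' with h | h | h
  · exact aux hw h
  · subst h
    refine Set.disjoint_left.mpr fun ω h1 h2 => ?_
    exact hne (by rw [← h1.2, ← h2.2])
  · exact (aux hw' h).symm

/-- total weight of first-entrance paths into `R'` (from `t`) through `w` -/
def fE (t w : Γ) : ℝ≥0∞ := ∑' m, P (Em X R' t w m)

lemma greenFn_eq (t z : Γ) : greenFn P X t z = ∑' n, P {ω | t * Zw X n ω = z} := rfl

lemma fE_le_one (hmeas : ∀ k, Measurable (X k)) {t w : Γ} (hw : w ∈ R') :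
    fE (P := P) X R' t w ≤ 1 := by
  have hd : Pairwise (Function.onFun Disjoint fun m => Em X R' t w m) := by
    intro m m' hne
    exact Em_disj X R' t hw hw (by simp [hne])
  rw [fE, ← measure_iUnion hd (fun m => Em_meas X R' hmeas t w m)]
  exact prob_le_one

/-- first-entrance decomposition at a fixed time -/
lemma A1 (hmeas : ∀ k, Measurable (X k))
    (hiid : iIndepFun X P)
    (hlaw : ∀ k, Measure.map (X k) P = μ) {z : Γ} (hz : z ∈ R') (t : Γ) (n : ℕ) :
    P {ω | t * Zw X n ω = z}
      = ∑ p ∈ Finset.range (n + 1) ×ˢ R',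
          P (Em X R' t p.2 p.1) * P {ω | p.2 * Zw X (n - p.1) ω = z} := by
  classical
  have hdec : {ω | t * Zw X n ω = z}
      = ⋃ p ∈ Finset.range (n + 1) ×ˢ R',
          (Em X R' t p.2 p.1 ∩ {ω | t * Zw X n ω = z}) := by
    ext ω
    simp only [Set.mem_setOf_eq, Set.mem_iUnion, Set.mem_inter_iff, Finset.mem_product,
      Finset.mem_range, exists_prop, Prod.exists]
    constructor
    · intro hω
      have hex : ∃ i, t * Zw X i ω ∈ R' := ⟨n, by rw [hω]; exact hz⟩
      have hle : Nat.find hex ≤ n := Nat.find_min' hex (by rw [hω]; exact hz)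
      exact ⟨Nat.find hex, t * Zw X (Nat.find hex) ω,
        ⟨Nat.lt_succ_of_le hle, Nat.find_spec hex⟩,
        ⟨fun i hi => Nat.find_min hex hi, rfl⟩, hω⟩
    · rintro ⟨m, w, _, _, hω⟩
      exact hω
  have hdisj : (↑(Finset.range (n + 1) ×ˢ R') : Set (ℕ × Γ)).PairwiseDisjoint
      (fun p : ℕ × Γ => Em X R' t p.2 p.1 ∩ {ω | t * Zw X n ω = z}) := by
    intro p hp q hq hpq
    simp only [Finset.coe_product, Set.mem_prod, Finset.mem_coe, Finset.mem_range] at hp hq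
    exact Disjoint.mono Set.inter_subset_left Set.inter_subset_left
      (Em_disj X R' t hp.2 hq.2 (by simpa using hpq))
  rw [hdec, measure_biUnion_finset hdisj (fun p _ =>
    (Em_meas X R' hmeas t p.2 p.1).inter ((measMulComp measurable_const
      (meas_Zw X hmeas n)) (measurableSet_singleton z)))]
  refine Finset.sum_congr rfl fun p hp => ?_
  simp only [Finset.mem_product, Finset.mem_range] at hp
  obtain ⟨hpm, hpw⟩ := hp
  have hmle : p.1 ≤ n := Nat.lt_succ_iff.mp hpm
  have hmn : p.1 + (n - p.1) = n := Nat.add_sub_cancel' hmle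
  have hsplit : Em X R' t p.2 p.1 ∩ {ω | t * Zw X n ω = z}
      = vm X p.1 ⁻¹' SEm R' t p.2 p.1 ∩ svm X p.1 (n - p.1) ⁻¹' SBpr (n - p.1) p.2 z := by
    rw [← Em_eq]
    ext ω
    simp only [Set.mem_inter_iff, Set.mem_setOf_eq, Set.mem_preimage, SBpr]
    rw [bridgeS X p.1 (n - p.1) ω le_rfl]
    have hkey : ∀ hE : ω ∈ Em X R' t p.2 p.1,
        t * Zw X n ω = p.2 * pp (fun k => X (p.1 + k) ω) (n - p.1) := by
      intro hE
      rw [← hE.2, mul_assoc, ← Zw_split, hmn]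
    constructor
    · rintro ⟨hE, hn⟩
      exact ⟨hE, by rw [← hkey hE]; exact hn⟩
    · rintro ⟨hE, hb⟩
      exact ⟨hE, by rw [hkey hE]; exact hb⟩
  rw [hsplit, core X hmeas hiid hlaw p.1 (n - p.1) _ _, preB0, ← Em_eq]

/-- diagonal rearrangement of a double sum -/
lemma diag (g : ℕ → ℕ → ℝ≥0∞) :
    ∑' n, ∑ m ∈ Finset.range (n + 1), g m (n - m) = ∑' m, ∑' k, g m k := by
  classical
  have h1 : ∀ n, ∑ m ∈ Finset.range (n + 1), g m (n - m)
      = ∑' m, if m ≤ n then g m (n - m) else 0 := by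
    intro n
    rw [tsum_eq_sum (s := Finset.range (n + 1))
      (fun m hm => if_neg (by simp only [Finset.mem_range] at hm; omega))]
    refine Finset.sum_congr rfl fun m hm => ?_
    rw [if_pos (by simp only [Finset.mem_range] at hm; omega)]
  calc ∑' n, ∑ m ∈ Finset.range (n + 1), g m (n - m)
      = ∑' n, ∑' m, if m ≤ n then g m (n - m) else 0 := by
        exact tsum_congr h1
    _ = ∑' m, ∑' n, if m ≤ n then g m (n - m) else 0 := ENNReal.tsum_comm
    _ = ∑' m, ∑' k, g m k := by
        refine tsum_congr fun m => ?_
        have hinj : Function.Injective fun k : ℕ => k + m := add_left_injective m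
        have hsupp : Function.support (fun n => if m ≤ n then g m (n - m) else 0)
            ⊆ Set.range fun k : ℕ => k + m := by
          intro n hn
          simp only [Function.mem_support] at hn
          by_cases h : m ≤ n
          · exact ⟨n - m, by show n - m + m = n; omega⟩
          · exact absurd (if_neg h) hn
        rw [← hinj.tsum_eq hsupp]
        refine tsum_congr fun k => ?_
        rw [if_pos (by omega)]
        congr 1
        omega

/-- first-entrance decomposition of the Green function -/
lemma A_dec (hmeas : ∀ k, Measurable (X k))
    (hiid : iIndepFun X P)
    (hlaw : ∀ k, Measure.map (X k) P = μ) {z : Γ} (hz : z ∈ R') (t : Γ) :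
    greenFn P X t z = ∑ w ∈ R', fE (P := P) X R' t w * greenFn P X w z := by
  rw [greenFn_eq]
  calc ∑' n, P {ω | t * Zw X n ω = z}
      = ∑' n, ∑ w ∈ R', ∑ m ∈ Finset.range (n + 1),
          P (Em X R' t w m) * P {ω | w * Zw X (n - m) ω = z} := by
        refine tsum_congr fun n => ?_
        rw [A1 X R' hmeas hiid hlaw hz t n, Finset.sum_product]
        rw [Finset.sum_comm]
    _ = ∑ w ∈ R', ∑' n, ∑ m ∈ Finset.range (n + 1),
          P (Em X R' t w m) * P {ω | w * Zw X (n - m) ω = z} := by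
        exact Summable.tsum_finsetSum fun w _ => ENNReal.summable
    _ = ∑ w ∈ R', fE (P := P) X R' t w * greenFn P X w z := by
        refine Finset.sum_congr rfl fun w _ => ?_
        rw [diag (fun m k => P (Em X R' t w m) * P {ω | w * Zw X k ω = z})]
        simp_rw [ENNReal.tsum_mul_left]
        rw [ENNReal.tsum_mul_right]
        rfl

/-- the probability of ever entering `R'` equals the total first-entrance weight -/
lemma first_entry_eq (hmeas : ∀ k, Measurable (X k)) (t : Γ) :
    P {ω | ∃ n, t * Zw X n ω ∈ R'} = ∑ w ∈ R', fE (P := P) X R' t w := by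
  classical
  have hset : {ω | ∃ n, t * Zw X n ω ∈ R'} = ⋃ p : ℕ × ↥R', Em X R' t ↑p.2 p.1 := by
    ext ω
    simp only [Set.mem_setOf_eq, Set.mem_iUnion]
    constructor
    · intro hex
      exact ⟨⟨Nat.find hex, ⟨t * Zw X (Nat.find hex) ω, Nat.find_spec hex⟩⟩,
        fun i hi => Nat.find_min hex hi, rfl⟩
    · rintro ⟨⟨m, w⟩, _, h2⟩
      exact ⟨m, h2 ▸ w.2⟩
  have hdisj : Pairwise (Function.onFun Disjoint fun p : ℕ × ↥R' => Em X R' t ↑p.2 p.1) := by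
    intro p q hpq
    refine Em_disj X R' t p.2.2 q.2.2 ?_
    intro h
    exact hpq (Prod.ext (by simpa using congrArg Prod.fst h)
      (Subtype.ext (by simpa using congrArg Prod.snd h)))
  rw [hset, measure_iUnion hdisj (fun p => Em_meas X R' hmeas t ↑p.2 p.1)]
  rw [ENNReal.tsum_prod (f := fun m (w : ↥R') => P (Em X R' t ↑w m)), ENNReal.tsum_comm]
  rw [← Finset.tsum_subtype R' (fun w => fE (P := P) X R' t w)]
  rfl

end Events

section Return

/-- first-return-to-identity event at time `m` -/
def Ret (m : ℕ) : Set Ω := {ω | (∀ i, 1 ≤ i → i < m → Zw X i ω ≠ 1) ∧ Zw X m ω = 1}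

def SRet (m : ℕ) : Set (Fin m → Γ) :=
  {v | (∀ i, 1 ≤ i → i < m → pp (padf m v) i ≠ 1) ∧ pp (padf m v) m = 1}

lemma Ret_eq (m : ℕ) : Ret X m = vm X m ⁻¹' SRet m := by
  ext ω
  have hb : ∀ i ≤ m, pp (padf m (vm X m ω)) i = Zw X i ω := fun i hi => bridge0 X m ω hi
  simp only [Ret, SRet, Set.mem_setOf_eq, Set.mem_preimage]
  constructor
  · rintro ⟨h1, h2⟩
    refine ⟨fun i hi1 hi2 => ?_, ?_⟩
    · rw [hb i hi2.le]; exact h1 i hi1 hi2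
    · rw [hb m le_rfl]; exact h2
  · rintro ⟨h1, h2⟩
    refine ⟨fun i hi1 hi2 => ?_, ?_⟩
    · rw [← hb i hi2.le]; exact h1 i hi1 hi2
    · rw [← hb m le_rfl]; exact h2

lemma Ret_meas (hmeas : ∀ k, Measurable (X k)) (m : ℕ) : MeasurableSet (Ret X m) := by
  have hrw : Ret X m =
      (⋂ i ∈ Finset.Ico 1 m, ((Zw X i) ⁻¹' {1})ᶜ) ∩ ((Zw X m) ⁻¹' {1}) := by
    ext ω
    simp only [Ret, Set.mem_setOf_eq, Set.mem_inter_iff, Set.mem_iInter, Finset.mem_Ico,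
      Set.mem_compl_iff, Set.mem_preimage, Set.mem_singleton_iff, and_imp]
  rw [hrw]
  exact (MeasurableSet.biInter (Set.to_countable _)
      (fun i _ => ((meas_Zw X hmeas i) (measurableSet_singleton 1)).compl)).inter
    ((meas_Zw X hmeas m) (measurableSet_singleton 1))

lemma Ret_disj : ∀ {m m' : ℕ}, 1 ≤ m → 1 ≤ m' → m ≠ m' →
    Disjoint (Ret X m) ((Ret X m')) := by
  have aux : ∀ {m m' : ℕ}, 1 ≤ m → m < m' → Disjoint (Ret X m) (Ret X m') := by
    intro m m' h1 hlt
    exact Set.disjoint_left.mpr fun ω hA hB => hB.1 m h1 hlt hA.2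
  intro m m' h1 h1' hne
  rcases Nat.lt_trichotomy m m' with h | h | h
  · exact aux h1 h
  · exact absurd h hne
  · exact (aux h1' h).symm

/-- first-return decomposition at a fixed time -/
lemma uRec (hmeas : ∀ k, Measurable (X k))
    (hiid : iIndepFun X P)
    (hlaw : ∀ k, Measure.map (X k) P = μ) {n : ℕ} (hn : 1 ≤ n) :
    P {ω | Zw X n ω = 1}
      = ∑ m ∈ Finset.Icc 1 n, P (Ret X m) * P {ω | Zw X (n - m) ω = 1} := by
  classical
  have hdec : {ω | Zw X n ω = 1} = ⋃ m ∈ Finset.Icc 1 n, (Ret X m ∩ {ω | Zw X n ω = 1}) := by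
    ext ω
    simp only [Set.mem_setOf_eq, Set.mem_iUnion, Set.mem_inter_iff, Finset.mem_Icc, exists_prop]
    constructor
    · intro hω
      have hex : ∃ i, 1 ≤ i ∧ Zw X i ω = 1 := ⟨n, hn, hω⟩
      refine ⟨Nat.find hex, ⟨(Nat.find_spec hex).1, Nat.find_min' hex ⟨hn, hω⟩⟩,
        ⟨fun i hi1 hi2 => ?_, (Nat.find_spec hex).2⟩, hω⟩
      intro hzi
      exact Nat.find_min hex hi2 ⟨hi1, hzi⟩
    · rintro ⟨m, _, _, hω⟩
      exact hω
  have hdisj : (↑(Finset.Icc 1 n) : Set ℕ).PairwiseDisjoint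
      (fun m => Ret X m ∩ {ω | Zw X n ω = 1}) := by
    intro m hm m' hm' hne
    simp only [Finset.coe_Icc, Set.mem_Icc] at hm hm'
    exact Disjoint.mono Set.inter_subset_left Set.inter_subset_left
      (Ret_disj X hm.1 hm'.1 hne)
  rw [hdec, measure_biUnion_finset hdisj (fun m _ =>
    (Ret_meas X hmeas m).inter ((meas_Zw X hmeas n) (measurableSet_singleton 1)))]
  refine Finset.sum_congr rfl fun m hm => ?_
  simp only [Finset.mem_Icc] at hm
  have hmn : m + (n - m) = n := Nat.add_sub_cancel' hm.2
  have hsplit : Ret X m ∩ {ω | Zw X n ω = 1}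
      = vm X m ⁻¹' SRet m ∩ svm X m (n - m) ⁻¹' SBpr (n - m) 1 1 := by
    rw [← Ret_eq]
    ext ω
    simp only [Set.mem_inter_iff, Set.mem_setOf_eq, Set.mem_preimage, SBpr]
    rw [bridgeS X m (n - m) ω le_rfl, one_mul]
    have hkey : ∀ _ : ω ∈ Ret X m,
        Zw X n ω = pp (fun k => X (m + k) ω) (n - m) := by
      intro hE
      conv_lhs => rw [← hmn]
      rw [Zw_split, hE.2, one_mul]
    constructor
    · rintro ⟨hE, hq⟩
      exact ⟨hE, by rw [← hkey hE]; exact hq⟩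
    · rintro ⟨hE, hb⟩
      exact ⟨hE, by rw [hkey hE]; exact hb⟩
  rw [hsplit, core X hmeas hiid hlaw m (n - m) _ _, preB0, ← Ret_eq]
  congr 2
  ext ω
  simp [one_mul]

lemma retSum (hmeas : ∀ k, Measurable (X k)) (N : ℕ) :
    ∑ m ∈ Finset.Icc 1 N, P (Ret X m) ≤ P {ω | ∃ n ≥ 1, walk 1 X n ω = 1} := by
  classical
  have hdisj : (↑(Finset.Icc 1 N) : Set ℕ).PairwiseDisjoint (fun m => Ret X m) := by
    intro m hm m' hm' hne
    simp only [Finset.coe_Icc, Set.mem_Icc] at hm hm'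
    exact Ret_disj X hm.1 hm'.1 hne
  rw [← measure_biUnion_finset hdisj (fun m _ => Ret_meas X hmeas m)]
  refine measure_mono ?_
  intro ω hω
  simp only [Set.mem_iUnion, Finset.mem_Icc, exists_prop] at hω
  obtain ⟨m, hm, hR⟩ := hω
  exact ⟨m, hm.1, by rw [walk_eq, hR.2, mul_one]⟩

end Return

section Finiteness

lemma ennBound {S r : ℝ≥0∞} (hS : S ≠ ∞) (hr : r < 1) (h : S ≤ 1 + r * S) :
    S ≤ (1 - r)⁻¹ := by
  have hrne : r ≠ ∞ := (hr.trans ENNReal.one_lt_top).ne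
  set s := S.toReal with hs
  set p := r.toReal with hp
  have hp1 : p < 1 := by
    have := (ENNReal.toReal_lt_toReal hrne ENNReal.one_ne_top).mpr hr
    simpa using this
  have hp0 : 0 ≤ p := ENNReal.toReal_nonneg
  have hs0 : 0 ≤ s := ENNReal.toReal_nonneg
  have hfin : (1 : ℝ≥0∞) + r * S ≠ ∞ :=
    ENNReal.add_ne_top.mpr ⟨ENNReal.one_ne_top, ENNReal.mul_ne_top hrne hS⟩
  have hsle : s ≤ 1 + p * s := by
    have h2 := ENNReal.toReal_mono hfin h
    rwa [ENNReal.toReal_add ENNReal.one_ne_top (ENNReal.mul_ne_top hrne hS),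
      ENNReal.toReal_mul, ENNReal.toReal_one] at h2
  have hppos : (0 : ℝ) < 1 - p := by linarith
  have hfinal : s ≤ (1 - p)⁻¹ := by
    rw [inv_eq_one_div, le_div_iff₀ hppos]
    nlinarith
  have h1 : S = ENNReal.ofReal s := (ENNReal.ofReal_toReal hS).symm
  have h2 : (1 : ℝ≥0∞) - r = ENNReal.ofReal (1 - p) := by
    rw [ENNReal.ofReal_sub _ hp0, ENNReal.ofReal_one, ENNReal.ofReal_toReal hrne]
  rw [h1, h2, ← ENNReal.ofReal_inv_of_pos hppos]
  exact ENNReal.ofReal_le_ofReal hfinal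

lemma SleInv (hmeas : ∀ k, Measurable (X k))
    (hiid : iIndepFun X P)
    (hlaw : ∀ k, Measure.map (X k) P = μ)
    (htrans : P {ω | ∃ n ≥ 1, walk 1 X n ω = 1} < 1) (N : ℕ) :
    ∑ n ∈ Finset.range (N + 1), P {ω | Zw X n ω = 1}
      ≤ (1 - P {ω | ∃ n ≥ 1, walk 1 X n ω = 1})⁻¹ := by
  classical
  set ρ := P {ω | ∃ n ≥ 1, walk 1 X n ω = 1} with hρ
  set S := ∑ n ∈ Finset.range (N + 1), P {ω | Zw X n ω = 1} with hSdef
  have hSfin : S ≠ ∞ := by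
    refine ne_top_of_le_ne_top (b := ((N : ℝ≥0∞) + 1)) ?_ ?_
    · exact ENNReal.add_ne_top.mpr ⟨ENNReal.natCast_ne_top N, ENNReal.one_ne_top⟩
    · calc S ≤ ∑ n ∈ Finset.range (N + 1), (1 : ℝ≥0∞) :=
            Finset.sum_le_sum fun n _ => prob_le_one
        _ = ((N : ℝ≥0∞) + 1) := by
            rw [Finset.sum_const, Finset.card_range, nsmul_eq_mul, mul_one]
            push_cast
            ring
  have hins : Finset.range (N + 1) = insert 0 (Finset.Icc 1 N) := by
    ext i
    simp only [Finset.mem_range, Finset.mem_insert, Finset.mem_Icc]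
    omega
  have hz0 : P {ω | Zw X 0 ω = 1} = 1 := by
    have : {ω | Zw X 0 ω = 1} = Set.univ := by
      ext ω; simp [Zw_zero]
    rw [this, measure_univ]
  have hstep : ∑ n ∈ Finset.Icc 1 N, P {ω | Zw X n ω = 1}
        = ∑ m ∈ Finset.Icc 1 N, ∑ n ∈ Finset.Icc m N,
            P (Ret X m) * P {ω | Zw X (n - m) ω = 1} := by
      rw [Finset.sum_congr rfl fun n hn =>
        uRec X hmeas hiid hlaw (Finset.mem_Icc.mp hn).1]
      refine Finset.sum_comm' ?_
      intro m n
      simp only [Finset.mem_Icc]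
      omega
  have hinner : ∀ m ∈ Finset.Icc 1 N,
        ∑ n ∈ Finset.Icc m N, P (Ret X m) * P {ω | Zw X (n - m) ω = 1}
          ≤ P (Ret X m) * S := by
    intro m hm
    rw [← Finset.mul_sum]
    refine mul_le_mul_right ?_ _
    have hre : ∑ n ∈ Finset.Icc m N, P {ω | Zw X (n - m) ω = 1}
        = ∑ k ∈ Finset.image (fun n => n - m) (Finset.Icc m N), P {ω | Zw X k ω = 1} := by
      rw [Finset.sum_image ?inj]
      intro a ha b hb hab
      simp only [Finset.coe_Icc, Set.mem_Icc, Finset.mem_coe, Finset.mem_Icc] at ha hb hab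
      omega
    rw [hre, hSdef]
    refine Finset.sum_le_sum_of_subset ?_
    intro k hk
    simp only [Finset.mem_image, Finset.mem_Icc, Finset.mem_range] at hk ⊢
    omega
  have hIcc : ∑ n ∈ Finset.Icc 1 N, P {ω | Zw X n ω = 1} ≤ ρ * S := by
    rw [hstep]
    calc ∑ m ∈ Finset.Icc 1 N, ∑ n ∈ Finset.Icc m N,
            P (Ret X m) * P {ω | Zw X (n - m) ω = 1}
        ≤ ∑ m ∈ Finset.Icc 1 N, P (Ret X m) * S := Finset.sum_le_sum hinner
      _ = (∑ m ∈ Finset.Icc 1 N, P (Ret X m)) * S := by rw [Finset.sum_mul]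
      _ ≤ ρ * S := mul_le_mul_left (retSum X hmeas N) S
  have hrec : S ≤ 1 + ρ * S := by
    calc S = 1 + ∑ n ∈ Finset.Icc 1 N, P {ω | Zw X n ω = 1} := by
          rw [hSdef, hins, Finset.sum_insert (by simp), hz0]
      _ ≤ 1 + ρ * S := add_le_add_right hIcc 1
  exact ennBound hSfin htrans hrec

lemma G11_le (hmeas : ∀ k, Measurable (X k))
    (hiid : iIndepFun X P)
    (hlaw : ∀ k, Measure.map (X k) P = μ)
    (htrans : P {ω | ∃ n ≥ 1, walk 1 X n ω = 1} < 1) :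
    greenFn P X 1 1 ≤ (1 - P {ω | ∃ n ≥ 1, walk 1 X n ω = 1})⁻¹ := by
  rw [greenFn_eq]
  have hone : ∀ n : ℕ, {ω | (1 : Γ) * Zw X n ω = 1} = {ω | Zw X n ω = 1} := by
    intro n; ext ω; simp
  calc ∑' n, P {ω | (1 : Γ) * Zw X n ω = 1} = ∑' n, P {ω | Zw X n ω = 1} :=
        tsum_congr fun n => by rw [hone n]
    _ ≤ (1 - P {ω | ∃ n ≥ 1, walk 1 X n ω = 1})⁻¹ := by
        rw [ENNReal.tsum_eq_iSup_nat]
        refine iSup_le fun M => ?_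
        match M with
        | 0 => simp
        | (N + 1) => exact SleInv X hmeas hiid hlaw htrans N

lemma Gfin (hmeas : ∀ k, Measurable (X k))
    (hiid : iIndepFun X P)
    (hlaw : ∀ k, Measure.map (X k) P = μ)
    (htrans : P {ω | ∃ n ≥ 1, walk 1 X n ω = 1} < 1) (t z : Γ) :
    greenFn P X t z ≤ (1 - P {ω | ∃ n ≥ 1, walk 1 X n ω = 1})⁻¹ := by
  have hA := A_dec X {z} hmeas hiid hlaw (Finset.mem_singleton_self z) t
  rw [Finset.sum_singleton] at hA
  have hGz : greenFn P X z z = greenFn P X 1 1 := by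
    rw [greenFn_eq, greenFn_eq]
    refine tsum_congr fun n => ?_
    congr 1
    ext ω
    simp
  rw [hA, hGz]
  calc fE (P := P) X {z} t z * greenFn P X 1 1
      ≤ 1 * (1 - P {ω | ∃ n ≥ 1, walk 1 X n ω = 1})⁻¹ :=
        mul_le_mul' (fE_le_one X {z} hmeas (Finset.mem_singleton_self z))
          (G11_le X hmeas hiid hlaw htrans)
    _ = _ := one_mul _

lemma Gne_top (hmeas : ∀ k, Measurable (X k))
    (hiid : iIndepFun X P)
    (hlaw : ∀ k, Measure.map (X k) P = μ)
    (htrans : P {ω | ∃ n ≥ 1, walk 1 X n ω = 1} < 1) (t z : Γ) :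
    greenFn P X t z ≠ ∞ := by
  refine ne_top_of_le_ne_top ?_ (Gfin X hmeas hiid hlaw htrans t z)
  rw [Ne, ENNReal.inv_eq_top, tsub_eq_zero_iff_le]
  exact fun h => absurd htrans (not_lt.mpr h)

end Finiteness

section Escape

variable (R' : Finset Γ)

def SEsc (j : ℕ) (z : Γ) : Set (Fin j → Γ) :=
  {v | ∀ k, 1 ≤ k → k ≤ j → z * pp (padf j v) k ∉ R'}

def escSet (z : Γ) : Set Ω := {ω | ∀ k, 1 ≤ k → z * Zw X k ω ∉ R'}

def escSetK (z : Γ) (K : ℕ) : Set Ω := {ω | ∀ k, 1 ≤ k → k ≤ K → z * Zw X k ω ∉ R'}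

lemma preEsc0 (j : ℕ) (z : Γ) : vm X j ⁻¹' SEsc R' j z = escSetK X R' z j := by
  ext ω
  have hb : ∀ i ≤ j, pp (padf j (vm X j ω)) i = Zw X i ω := fun i hi => bridge0 X j ω hi
  simp only [Set.mem_preimage, SEsc, Set.mem_setOf_eq, escSetK]
  constructor
  · intro h k h1 h2; rw [← hb k h2]; exact h k h1 h2
  · intro h k h1 h2; rw [hb k h2]; exact h k h1 h2

lemma preEscS (n j : ℕ) (z : Γ) :
    svm X n j ⁻¹' SEsc R' j z
      = {ω | ∀ k, 1 ≤ k → k ≤ j → z * pp (fun i => X (n + i) ω) k ∉ R'} := by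
  ext ω
  have hb : ∀ i ≤ j, pp (padf j (svm X n j ω)) i = pp (fun k => X (n + k) ω) i :=
    fun i hi => bridgeS X n j ω hi
  simp only [Set.mem_preimage, SEsc, Set.mem_setOf_eq]
  constructor
  · intro h k h1 h2; rw [← hb k h2]; exact h k h1 h2
  · intro h k h1 h2; rw [hb k h2]; exact h k h1 h2

lemma escSetK_meas (hmeas : ∀ k, Measurable (X k)) (z : Γ) (K : ℕ) :
    MeasurableSet (escSetK X R' z K) := by
  have : escSetK X R' z K
      = ⋂ k ∈ Finset.Icc 1 K, ((fun ω => z * Zw X k ω) ⁻¹' (↑R' : Set Γ))ᶜ := by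
    ext ω
    simp only [escSetK, Set.mem_setOf_eq, Set.mem_iInter, Finset.mem_Icc, Set.mem_compl_iff,
      Set.mem_preimage, Finset.mem_coe, and_imp]
  rw [this]
  exact MeasurableSet.biInter (Set.to_countable _) fun k _ =>
    ((measMulComp measurable_const (meas_Zw X hmeas k)) (allMeas _)).compl

lemma escSet_meas (hmeas : ∀ k, Measurable (X k)) (z : Γ) :
    MeasurableSet (escSet X R' z) := by
  have : escSet X R' z = ⋂ K, escSetK X R' z K := by
    ext ω
    simp only [escSet, Set.mem_setOf_eq, Set.mem_iInter, escSetK]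
    exact ⟨fun h K k h1 _ => h k h1, fun h k h1 => h k k h1 le_rfl⟩
  rw [this]
  exact MeasurableSet.iInter fun K => escSetK_meas X R' hmeas z K

lemma esc_iInf (hmeas : ∀ k, Measurable (X k)) (z : Γ) :
    P (escSet X R' z) = ⨅ K, P (escSetK X R' z K) := by
  have hset : escSet X R' z = ⋂ K, escSetK X R' z K := by
    ext ω
    simp only [escSet, Set.mem_setOf_eq, Set.mem_iInter, escSetK]
    exact ⟨fun h K k h1 _ => h k h1, fun h k h1 => h k k h1 le_rfl⟩
  have hanti : Antitone fun K => escSetK X R' z K := by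
    intro K K' hKK' ω hω k h1 h2
    exact hω k h1 (h2.trans hKK')
  rw [hset]
  exact Directed.measure_iInter
    (fun K => (escSetK_meas X R' hmeas z K).nullMeasurableSet)
    hanti.directed_ge ⟨0, measure_ne_top P _⟩

/-- "last visit to `R'` at time `n`, at `z`" event (for the walk started at `w`) -/
def Ln (w z : Γ) (n : ℕ) : Set Ω :=
  {ω | w * Zw X n ω = z} ∩ {ω | ∀ k, 1 ≤ k → z * pp (fun i => X (n + i) ω) k ∉ R'}

def LnK (w z : Γ) (n K : ℕ) : Set Ω :=
  {ω | w * Zw X n ω = z} ∩ svm X n K ⁻¹' SEsc R' K z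

lemma LnK_prob (hmeas : ∀ k, Measurable (X k))
    (hiid : iIndepFun X P)
    (hlaw : ∀ k, Measure.map (X k) P = μ) (w z : Γ) (n K : ℕ) :
    P (LnK X R' w z n K) = P {ω | w * Zw X n ω = z} * P (escSetK X R' z K) := by
  have h1 : LnK X R' w z n K = vm X n ⁻¹' SBpr n w z ∩ svm X n K ⁻¹' SEsc R' K z := by
    rw [LnK, preB0]
  rw [h1, core X hmeas hiid hlaw n K _ _, preB0, preEsc0]

lemma Ln_prob (hmeas : ∀ k, Measurable (X k))
    (hiid : iIndepFun X P)
    (hlaw : ∀ k, Measure.map (X k) P = μ) (w z : Γ) (n : ℕ) :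
    P (Ln X R' w z n) = P {ω | w * Zw X n ω = z} * P (escSet X R' z) := by
  have hset : Ln X R' w z n = ⋂ K, LnK X R' w z n K := by
    simp only [LnK, preEscS]
    rw [Ln, ← Set.inter_iInter]
    congr 1
    ext ω
    simp only [Set.mem_setOf_eq, Set.mem_iInter]
    exact ⟨fun h K k h1 _ => h k h1, fun h k h1 => h k k h1 le_rfl⟩
  have hanti : Antitone fun K => LnK X R' w z n K := by
    intro K K' hKK'
    refine Set.inter_subset_inter subset_rfl ?_
    rw [preEscS, preEscS]
    intro ω hω k h1 h2
    exact hω k h1 (h2.trans hKK')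
  have hmK : ∀ K, MeasurableSet (LnK X R' w z n K) := by
    intro K
    refine MeasurableSet.inter ?_ ?_
    · exact (measMulComp measurable_const (meas_Zw X hmeas n)) (measurableSet_singleton z)
    · rw [preEscS]
      have : {ω | ∀ k, 1 ≤ k → k ≤ K → z * pp (fun i => X (n + i) ω) k ∉ R'}
          = ⋂ k ∈ Finset.Icc 1 K, ((fun ω => z * pp (fun i => X (n + i) ω) k) ⁻¹' (↑R' : Set Γ))ᶜ := by
        ext ω
        simp only [Set.mem_setOf_eq, Set.mem_iInter, Finset.mem_Icc, Set.mem_compl_iff,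
          Set.mem_preimage, Finset.mem_coe, and_imp]
      rw [this]
      refine MeasurableSet.biInter (Set.to_countable _) fun k _ => ?_
      exact ((measMulComp measurable_const (meas_blk X hmeas n k)) (allMeas _)).compl
  rw [hset]
  have hiInter := Directed.measure_iInter (μ := P)
    (fun K => (hmK K).nullMeasurableSet) hanti.directed_ge ⟨0, measure_ne_top P _⟩
  rw [hiInter]
  have : ∀ K, P (LnK X R' w z n K) = P {ω | w * Zw X n ω = z} * P (escSetK X R' z K) :=
    LnK_prob X R' hmeas hiid hlaw w z n
  simp_rw [this]
  rw [← ENNReal.mul_iInf (fun h => absurd h (measure_ne_top P _)), esc_iInf X R' hmeas z]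

end Escape

section LastExit

variable (R' : Finset Γ)

lemma inR_prob (hmeas : ∀ k, Measurable (X k)) (w : Γ) (n : ℕ) :
    P {ω | w * Zw X n ω ∈ R'} = ∑ z ∈ R', P {ω | w * Zw X n ω = z} := by
  classical
  have hset : {ω | w * Zw X n ω ∈ R'} = ⋃ z ∈ R', {ω | w * Zw X n ω = z} := by
    ext ω
    simp only [Set.mem_setOf_eq, Set.mem_iUnion, exists_prop]
    exact ⟨fun h => ⟨_, h, rfl⟩, fun ⟨z, hz, he⟩ => he ▸ hz⟩
  rw [hset]
  refine measure_biUnion_finset ?_ (fun z _ => ?_)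
  · intro z _ z' _ hne
    exact Set.disjoint_left.mpr fun ω h1 h2 => hne (h1 ▸ h2 ▸ rfl)
  · exact (measMulComp measurable_const (meas_Zw X hmeas n)) (measurableSet_singleton z)

lemma visits_ne_top (hmeas : ∀ k, Measurable (X k))
    (hiid : iIndepFun X P)
    (hlaw : ∀ k, Measure.map (X k) P = μ)
    (htrans : P {ω | ∃ n ≥ 1, walk 1 X n ω = 1} < 1) (w : Γ) :
    (∑' n, P {ω | w * Zw X n ω ∈ R'}) ≠ ∞ := by
  have h1 : ∑' n, P {ω | w * Zw X n ω ∈ R'}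
      = ∑ z ∈ R', greenFn P X w z := by
    calc ∑' n, P {ω | w * Zw X n ω ∈ R'}
        = ∑' n, ∑ z ∈ R', P {ω | w * Zw X n ω = z} :=
          tsum_congr fun n => inR_prob X R' hmeas w n
      _ = ∑ z ∈ R', ∑' n, P {ω | w * Zw X n ω = z} :=
          Summable.tsum_finsetSum fun z _ => ENNReal.summable
      _ = ∑ z ∈ R', greenFn P X w z := by
          exact Finset.sum_congr rfl fun z _ => (greenFn_eq X w z).symm
  rw [h1]
  refine (ENNReal.sum_lt_top.mpr fun z _ => ?_).ne
  exact lt_of_le_of_ne le_top (Gne_top X hmeas hiid hlaw htrans w z)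

/-- last-exit decomposition: total mass one -/
lemma C1 (hmeas : ∀ k, Measurable (X k))
    (hiid : iIndepFun X P)
    (hlaw : ∀ k, Measure.map (X k) P = μ)
    (htrans : P {ω | ∃ n ≥ 1, walk 1 X n ω = 1} < 1) {w : Γ} (hw : w ∈ R') :
    ∑ z ∈ R', greenFn P X w z * P (escSet X R' z) = 1 := by
  classical
  set bad : Set Ω := limsup (fun n => {ω | w * Zw X n ω ∈ R'}) atTop with hbad
  have hbad0 : P bad = 0 :=
    measure_limsup_atTop_eq_zero (visits_ne_top X R' hmeas hiid hlaw htrans w)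
  have hbadmem : ∀ ω, ω ∉ bad → ∃ N, ∀ n ≥ N, w * Zw X n ω ∉ R' := by
    intro ω hω
    have : bad = ⋂ N, ⋃ n, ⋃ (_ : n ≥ N), {ω | w * Zw X n ω ∈ R'} := by
      rw [hbad, limsup_eq_iInf_iSup_of_nat]; rfl
    rw [this] at hω
    simp only [Set.mem_iInter, Set.mem_iUnion, Set.mem_setOf_eq, not_forall, not_exists] at hω
    obtain ⟨N, hN⟩ := hω
    exact ⟨N, fun n hn => hN n hn⟩
  -- cover
  have hcover : ∀ ω, ω ∉ bad → ∃ p : ℕ × ↥R', ω ∈ Ln X R' w ↑p.2 p.1 := by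
    intro ω hω
    obtain ⟨N, hN⟩ := hbadmem ω hω
    set Q : ℕ → Prop := fun n => w * Zw X n ω ∈ R' with hQ
    have hQ0 : Q 0 := by
      simp only [hQ, Zw_zero, mul_one]
      exact hw
    set n₀ := Nat.findGreatest Q N with hn₀
    have hQn₀ : Q n₀ := Nat.findGreatest_spec (Nat.zero_le N) hQ0
    refine ⟨⟨n₀, ⟨w * Zw X n₀ ω, hQn₀⟩⟩, rfl, ?_⟩
    intro k h1k
    have hblk : (w * Zw X n₀ ω) * pp (fun i => X (n₀ + i) ω) k = w * Zw X (n₀ + k) ω := by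
      rw [mul_assoc, ← Zw_split]
    rw [hblk]
    by_cases hle : n₀ + k ≤ N
    · exact Nat.findGreatest_is_greatest (P := Q) (by omega) hle
    · exact hN (n₀ + k) (by omega)
  -- disjointness
  have hdisj : Pairwise (Function.onFun Disjoint fun p : ℕ × ↥R' => Ln X R' w ↑p.2 p.1) := by
    have aux : ∀ (n n' : ℕ) (z z' : ↥R'), n < n' →
        Disjoint (Ln X R' w ↑z n) (Ln X R' w ↑z' n') := by
      intro n n' z z' hlt
      refine Set.disjoint_left.mpr fun ω h1 h2 => ?_
      have hblk : (↑z : Γ) * pp (fun i => X (n + i) ω) (n' - n) = w * Zw X n' ω := by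
        rw [← h1.1, mul_assoc, ← Zw_split, Nat.add_sub_cancel' hlt.le]
      have := h1.2 (n' - n) (by omega)
      rw [hblk, h2.1] at this
      exact this z'.2
    intro p q hpq
    rcases p with ⟨pn, pz⟩
    rcases q with ⟨qn, qz⟩
    rcases Nat.lt_trichotomy pn qn with h | h | h
    · exact aux pn qn pz qz h
    · subst h
      have hz : pz ≠ qz := fun hzz => hpq (by rw [hzz])
      refine Set.disjoint_left.mpr fun ω h1 h2 => ?_
      exact hz (Subtype.ext (by rw [← h1.1, ← h2.1]))
    · exact (aux qn pn qz pz h).symm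
  have hmeasL : ∀ p : ℕ × ↥R', MeasurableSet (Ln X R' w ↑p.2 p.1) := by
    intro p
    refine MeasurableSet.inter ?_ ?_
    · exact (measMulComp measurable_const (meas_Zw X hmeas p.1)) (measurableSet_singleton _)
    · have : {ω | ∀ k, 1 ≤ k → (↑p.2 : Γ) * pp (fun i => X (p.1 + i) ω) k ∉ R'}
          = ⋂ k ∈ {k : ℕ | 1 ≤ k}, ((fun ω => (↑p.2 : Γ) * pp (fun i => X (p.1 + i) ω) k) ⁻¹' (↑R' : Set Γ))ᶜ := by
        ext ω
        simp only [Set.mem_setOf_eq, Set.mem_iInter, Set.mem_compl_iff, Set.mem_preimage,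
          Finset.mem_coe]
      rw [this]
      exact MeasurableSet.biInter (Set.to_countable _) fun k _ =>
        ((measMulComp measurable_const (meas_blk X hmeas p.1 k)) (allMeas _)).compl
  -- total mass one
  have hone : ∑' p : ℕ × ↥R', P (Ln X R' w ↑p.2 p.1) = 1 := by
    have hle : (∑' p : ℕ × ↥R', P (Ln X R' w ↑p.2 p.1)) ≤ 1 := by
      rw [← measure_iUnion hdisj hmeasL]
      exact prob_le_one
    have hge : (1 : ℝ≥0∞) ≤ ∑' p : ℕ × ↥R', P (Ln X R' w ↑p.2 p.1) := by
      rw [← measure_iUnion hdisj hmeasL]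
      have huniv : (Set.univ : Set Ω) ⊆ (⋃ p : ℕ × ↥R', Ln X R' w ↑p.2 p.1) ∪ bad := by
        intro ω _
        by_cases hb : ω ∈ bad
        · exact Or.inr hb
        · obtain ⟨p, hp⟩ := hcover ω hb
          exact Or.inl (Set.mem_iUnion.mpr ⟨p, hp⟩)
      calc (1 : ℝ≥0∞) = P Set.univ := measure_univ.symm
        _ ≤ P ((⋃ p : ℕ × ↥R', Ln X R' w ↑p.2 p.1) ∪ bad) := measure_mono huniv
        _ ≤ P (⋃ p : ℕ × ↥R', Ln X R' w ↑p.2 p.1) + P bad := measure_union_le _ _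
        _ = P (⋃ p : ℕ × ↥R', Ln X R' w ↑p.2 p.1) := by rw [hbad0, add_zero]
    exact le_antisymm hle hge
  -- compute the sum
  calc ∑ z ∈ R', greenFn P X w z * P (escSet X R' z)
      = ∑' z : ↥R', greenFn P X w ↑z * P (escSet X R' ↑z) :=
        (Finset.tsum_subtype R' fun z => greenFn P X w z * P (escSet X R' z)).symm
    _ = ∑' z : ↥R', ∑' n, P {ω | w * Zw X n ω = ↑z} * P (escSet X R' ↑z) := by
        refine tsum_congr fun z => ?_
        rw [greenFn_eq, ENNReal.tsum_mul_right]
    _ = ∑' z : ↥R', ∑' n, P (Ln X R' w ↑z n) := by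
        refine tsum_congr fun z => tsum_congr fun n => ?_
        exact (Ln_prob X R' hmeas hiid hlaw w ↑z n).symm
    _ = ∑' p : ℕ × ↥R', P (Ln X R' w ↑p.2 p.1) := by
        rw [ENNReal.tsum_prod (f := fun (n : ℕ) (z : ↥R') => P (Ln X R' w ↑z n))]
        exact ENNReal.tsum_comm
    _ = 1 := hone

end LastExit

section Chain

lemma hgen_sum (hmeas : ∀ k, Measurable (X k))
    (hiid : iIndepFun X P)
    (hlaw : ∀ k, Measure.map (X k) P = μ)
    (htrans : P {ω | ∃ n ≥ 1, walk 1 X n ω = 1} < 1) (R' : Finset Γ) (t : Γ) :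
    ∑ w ∈ R', fE (P := P) X R' t w
      = ∑ z ∈ R', greenFn P X t z * P (escSet X R' z) := by
  calc ∑ w ∈ R', fE (P := P) X R' t w
      = ∑ w ∈ R', fE (P := P) X R' t w
          * (∑ z ∈ R', greenFn P X w z * P (escSet X R' z)) := by
        refine Finset.sum_congr rfl fun w hw => ?_
        rw [C1 X R' hmeas hiid hlaw htrans hw, mul_one]
    _ = ∑ w ∈ R', ∑ z ∈ R',
          fE (P := P) X R' t w * (greenFn P X w z * P (escSet X R' z)) := by
        simp_rw [Finset.mul_sum]
    _ = ∑ z ∈ R', ∑ w ∈ R',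
          fE (P := P) X R' t w * (greenFn P X w z * P (escSet X R' z)) :=
        Finset.sum_comm
    _ = ∑ z ∈ R', (∑ w ∈ R', fE (P := P) X R' t w * greenFn P X w z)
          * P (escSet X R' z) := by
        refine Finset.sum_congr rfl fun z hz => ?_
        rw [Finset.sum_mul]
        simp_rw [mul_assoc]
    _ = ∑ z ∈ R', greenFn P X t z * P (escSet X R' z) := by
        refine Finset.sum_congr rfl fun z hz => ?_
        rw [← A_dec X R' hmeas hiid hlaw hz t]

lemma chain (hmeas : ∀ k, Measurable (X k))
    (hiid : iIndepFun X P)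
    (hlaw : ∀ k, Measure.map (X k) P = μ)
    (htrans : P {ω | ∃ n ≥ 1, walk 1 X n ω = 1} < 1) {a : ℝ} (x : Γ) (R' : Finset Γ)
    (hsub : ∀ z ∈ R', ENNReal.ofReal a * greenFn P X 1 z ≤ greenFn P X x z) :
    ENNReal.ofReal a * P {ω | ∃ n, (1 : Γ) * Zw X n ω ∈ R'} ≤ 1 := by
  rw [first_entry_eq X R' hmeas 1, hgen_sum X hmeas hiid hlaw htrans R' 1]
  calc ENNReal.ofReal a * ∑ z ∈ R', greenFn P X 1 z * P (escSet X R' z)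
      = ∑ z ∈ R', (ENNReal.ofReal a * greenFn P X 1 z) * P (escSet X R' z) := by
        rw [Finset.mul_sum]
        simp_rw [mul_assoc]
    _ ≤ ∑ z ∈ R', greenFn P X x z * P (escSet X R' z) :=
        Finset.sum_le_sum fun z hz => mul_le_mul_left (hsub z hz) _
    _ = ∑ w ∈ R', fE (P := P) X R' x w :=
        (hgen_sum X hmeas hiid hlaw htrans R' x).symm
    _ = P {ω | ∃ n, x * Zw X n ω ∈ R'} := (first_entry_eq X R' hmeas x).symm
    _ ≤ 1 := prob_le_one

end Chain

end MKMI

open MKMI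

/-- maximal inequality for the Martin kernel along the walk:
if `X̃₁ = Y` has the reversed law `μ̃` and is independent of the walk, then
`ℙ⊗ℙ̃[sup_n K(X̃₁, Z_n) ≥ a] ≤ 1/a` for every `a > 0`. -/
theorem martin_kernel_maximal_inequality
    [Group Γ] [Countable Γ] [MeasurableSpace Γ] [MeasurableSingletonClass Γ]
    [MeasurableSpace Ω] (P : Measure Ω) [IsProbabilityMeasure P]
    (μ : Measure Γ) [IsProbabilityMeasure μ]
    (X : ℕ → Ω → Γ) (hmeas : ∀ k, Measurable (X k))
    (hiid : iIndepFun X P)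
    (hlaw : ∀ k, Measure.map (X k) P = μ)
    (hgen : Subgroup.closure {g : Γ | μ {g} ≠ 0} = ⊤)
    (htrans : P {ω | ∃ n ≥ 1, walk 1 X n ω = 1} < 1)
    (Y : Ω → Γ) (hYmeas : Measurable Y)
    (hYlaw : Measure.map Y P = Measure.map (fun g : Γ => g⁻¹) μ)
    (hYindep : IndepFun Y (fun ω k => X k ω) P) :
    ∀ a : ℝ, 0 < a →
      P {ω | ∃ n : ℕ, a ≤ martinK P X (Y ω) (walk 1 X n ω)}
        ≤ ENNReal.ofReal (1 / a) := by
  intro a ha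
  classical
  set R : Γ → Set Γ := fun x =>
    {z | ENNReal.ofReal a * greenFn P X 1 z ≤ greenFn P X x z ∧ greenFn P X 1 z ≠ 0}
    with hR
  have hGfin : ∀ t z : Γ, greenFn P X t z ≠ ∞ :=
    fun t z => Gne_top X hmeas hiid hlaw htrans t z
  have hEQ : ∀ x z : Γ, a ≤ martinK P X x z ↔ z ∈ R x := by
    intro x z
    by_cases h0 : greenFn P X 1 z = 0
    · constructor
      · intro hle
        exfalso
        rw [martinK, h0] at hle
        simp only [ENNReal.toReal_zero, div_zero] at hle
        linarith
      · intro hz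
        exact absurd h0 hz.2
    · have hpos : 0 < (greenFn P X 1 z).toReal := ENNReal.toReal_pos h0 (hGfin 1 z)
      rw [martinK, le_div_iff₀ hpos]
      constructor
      · intro h
        refine ⟨?_, h0⟩
        have h2 := ENNReal.ofReal_le_ofReal h
        rwa [ENNReal.ofReal_mul ha.le, ENNReal.ofReal_toReal (hGfin 1 z),
          ENNReal.ofReal_toReal (hGfin x z)] at h2
      · intro hz
        have h2 := ENNReal.toReal_mono (hGfin x z) hz.1
        rwa [ENNReal.toReal_mul, ENNReal.toReal_ofReal ha.le] at h2
  -- per-x bound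
  obtain ⟨s, hs⟩ := exists_surjective_nat Γ
  have hperx : ∀ x : Γ,
      P {ω | ∃ n, walk 1 X n ω ∈ R x} ≤ ENNReal.ofReal (1 / a) := by
    intro x
    set F : ℕ → Finset Γ := fun N =>
      ((Finset.range N).image s).filter (fun z => z ∈ R x) with hF
    have hmono : Monotone fun N => {ω | ∃ n, (1 : Γ) * Zw X n ω ∈ F N} := by
      intro N N' hNN' ω hω
      obtain ⟨n, hn⟩ := hω
      refine ⟨n, ?_⟩
      simp only [hF, Finset.mem_filter, Finset.mem_image, Finset.mem_range] at hn ⊢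
      exact ⟨⟨hn.1.choose, ⟨by have := hn.1.choose_spec.1; omega, hn.1.choose_spec.2⟩⟩, hn.2⟩
    have hun : (⋃ N, {ω | ∃ n, (1 : Γ) * Zw X n ω ∈ F N})
        = {ω | ∃ n, walk 1 X n ω ∈ R x} := by
      ext ω
      simp only [Set.mem_iUnion, Set.mem_setOf_eq]
      constructor
      · rintro ⟨N, n, hn⟩
        refine ⟨n, ?_⟩
        simp only [hF, Finset.mem_filter] at hn
        exact hn.2
      · rintro ⟨n, hn⟩
        obtain ⟨k, hk⟩ := hs (walk 1 X n ω)
        refine ⟨k + 1, n, ?_⟩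
        simp only [hF, Finset.mem_filter, Finset.mem_image, Finset.mem_range]
        exact ⟨⟨k, Nat.lt_succ_self k, hk⟩, hn⟩
    rw [← hun, Monotone.measure_iUnion hmono]
    refine iSup_le fun N => ?_
    have hchain := chain X hmeas hiid hlaw htrans x (F N)
      (fun z hz => by
        simp only [hF, Finset.mem_filter] at hz
        exact hz.2.1)
    have hle : P {ω | ∃ n, (1 : Γ) * Zw X n ω ∈ F N} ≤ (ENNReal.ofReal a)⁻¹ :=
      ENNReal.le_inv_iff_mul_le.mpr (by rwa [mul_comm] at hchain)
    rwa [one_div, ENNReal.ofReal_inv_of_pos ha]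
  -- assembly
  have hset : {ω | ∃ n, a ≤ martinK P X (Y ω) (walk 1 X n ω)}
      = ⋃ x : Γ, (Y ⁻¹' {x} ∩ {ω | ∃ n, walk 1 X n ω ∈ R x}) := by
    ext ω
    simp only [Set.mem_setOf_eq, Set.mem_iUnion, Set.mem_inter_iff, Set.mem_preimage,
      Set.mem_singleton_iff]
    constructor
    · rintro ⟨n, hn⟩
      exact ⟨Y ω, rfl, n, (hEQ (Y ω) _).mp hn⟩
    · rintro ⟨x, hYx, n, hn⟩
      subst hYx
      exact ⟨n, (hEQ (Y ω) _).mpr hn⟩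
  have hmeasE : ∀ x : Γ, MeasurableSet {ω | ∃ n, walk 1 X n ω ∈ R x} := by
    intro x
    have hrw : {ω | ∃ n, walk 1 X n ω ∈ R x}
        = ⋃ n, (fun ω => walk 1 X n ω) ⁻¹' (R x) := by
      ext ω; simp [Set.mem_iUnion]
    rw [hrw]
    refine MeasurableSet.iUnion fun n => ?_
    have hw : Measurable fun ω => walk 1 X n ω := by
      have : (fun ω => walk 1 X n ω) = fun ω => (1 : Γ) * Zw X n ω := rfl
      rw [this]
      exact measMulComp measurable_const (meas_Zw X hmeas n)
    exact hw (allMeas _)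
  have hfibdisj : Pairwise (Function.onFun Disjoint fun x : Γ => Y ⁻¹' {x}) := by
    intro x x' hxx'
    refine Set.disjoint_left.mpr fun ω h1 h2 => hxx' ?_
    simp only [Set.mem_preimage, Set.mem_singleton_iff] at h1 h2
    rw [← h1, ← h2]
  have hdisj : Pairwise (Function.onFun Disjoint
      fun x : Γ => Y ⁻¹' {x} ∩ {ω | ∃ n, walk 1 X n ω ∈ R x}) := by
    intro x x' hxx'
    exact Disjoint.mono Set.inter_subset_left Set.inter_subset_left (hfibdisj hxx')
  rw [hset, measure_iUnion hdisj
    (fun x => (hYmeas (measurableSet_singleton x)).inter (hmeasE x))]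
  have hindep : ∀ x : Γ,
      P (Y ⁻¹' {x} ∩ {ω | ∃ n, walk 1 X n ω ∈ R x})
        = P (Y ⁻¹' {x}) * P {ω | ∃ n, walk 1 X n ω ∈ R x} := by
    intro x
    have hSx : MeasurableSet {f : ℕ → Γ | ∃ n, (1 : Γ) * pp f n ∈ R x} := by
      have hrw : {f : ℕ → Γ | ∃ n, (1 : Γ) * pp f n ∈ R x}
          = ⋃ n, (fun f : ℕ → Γ => (1 : Γ) * pp f n) ⁻¹' (R x) := by
        ext f; simp [Set.mem_iUnion]
      rw [hrw]
      refine MeasurableSet.iUnion fun n => ?_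
      exact (measMulComp measurable_const (meas_pp n)) (allMeas _)
    exact hYindep.measure_inter_preimage_eq_mul _ _ (measurableSet_singleton x) hSx
  calc ∑' x : Γ, P (Y ⁻¹' {x} ∩ {ω | ∃ n, walk 1 X n ω ∈ R x})
      = ∑' x : Γ, P (Y ⁻¹' {x}) * P {ω | ∃ n, walk 1 X n ω ∈ R x} :=
        tsum_congr hindep
    _ ≤ ∑' x : Γ, P (Y ⁻¹' {x}) * ENNReal.ofReal (1 / a) :=
        ENNReal.tsum_le_tsum fun x => mul_le_mul_right (hperx x) _
    _ = (∑' x : Γ, P (Y ⁻¹' {x})) * ENNReal.ofReal (1 / a) := ENNReal.tsum_mul_right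
    _ ≤ 1 * ENNReal.ofReal (1 / a) := by
        refine mul_le_mul_left ?_ _
        rw [← measure_iUnion hfibdisj (fun x => hYmeas (measurableSet_singleton x))]
        exact prob_le_one
    _ = ENNReal.ofReal (1 / a) := one_mul _
end
end

section
/- Let Γ be a countable group and μ a probability measure on Γ whose support generates Γ, with finite entropy H(μ), such that the associated random walk is transient. Then for every n ≥ 0, E[d_G(e, Z_{n+1}) − d_G(e, Z_n)] = Σ_{x∈Γ} μ(x⁻¹) · E[−ln K(x, Z_n)], where K(x, y) = G(x, y)/G(e, y) is the Martin kernel; that is, E[−ln G(e, Z_{n+1}) + ln G(e, Z_n)] = E ⊗ Ẽ[−ln K(X̃₁, Z_n)] with X̃₁ an independent random variable of law μ̃(x) = μ(x⁻¹). -/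
open MeasureTheory ProbabilityTheory Filter
open scoped ENNReal

noncomputable section

variable {Γ Ω : Type*}

section RW

set_option linter.unusedSectionVars false
set_option linter.unnecessarySimpa false
set_option maxHeartbeats 1000000

variable [Group Γ] [Countable Γ] [MeasurableSpace Γ] [MeasurableSingletonClass Γ]
  [MeasurableSpace Ω]

/-- Window product `X_j X_{j+1} ⋯ X_{j+n-1}`. -/
def pw (X : ℕ → Ω → Γ) (j n : ℕ) (ω : Ω) : Γ :=
  ((List.range n).map fun k => X (j + k) ω).prod

lemma walk_one_eq (X : ℕ → Ω → Γ) (n : ℕ) (ω : Ω) : walk 1 X n ω = pw X 0 n ω := by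
  simp [walk, pw]

lemma pw_zero (X : ℕ → Ω → Γ) (j : ℕ) (ω : Ω) : pw X j 0 ω = 1 := by simp [pw]

lemma pw_succ_left (X : ℕ → Ω → Γ) (j n : ℕ) (ω : Ω) :
    pw X j (n + 1) ω = X j ω * pw X (j + 1) n ω := by
  unfold pw
  rw [List.range_succ_eq_map, List.map_cons, List.prod_cons, List.map_map]
  congr 2
  apply List.map_congr_left
  intro k _
  simp only [Function.comp_apply]
  congr 1
  omega

lemma pw_add (X : ℕ → Ω → Γ) (j m n : ℕ) (ω : Ω) :
    pw X j (m + n) ω = pw X j m ω * pw X (j + m) n ω := by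
  unfold pw
  rw [List.range_add, List.map_append, List.prod_append, List.map_map]
  congr 2
  apply List.map_congr_left
  intro k _
  simp only [Function.comp_apply]
  congr 1
  omega

lemma measurable_pw {X : ℕ → Ω → Γ} (hmeas : ∀ k, Measurable (X k)) (j n : ℕ) :
    Measurable (pw X j n) := by
  induction n generalizing j with
  | zero =>
      have : pw X j 0 = fun _ => (1 : Γ) := by funext ω; exact pw_zero X j ω
      rw [this]; exact measurable_const
  | succ n ih =>
      have : pw X j (n + 1) = fun ω => X j ω * pw X (j + 1) n ω := by
        funext ω; exact pw_succ_left X j n ω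
      rw [this]
      exact (measurable_of_countable (fun p : Γ × Γ => p.1 * p.2)).comp
        ((hmeas j).prodMk (ih (j + 1)))

lemma meas_set_of_countable {α : Type*} [Countable α] [MeasurableSpace α]
    [MeasurableSingletonClass α] (s : Set α) : MeasurableSet s :=
  s.to_countable.measurableSet

/-- Block independence: an event determined by the first `k` steps is independent of an event
determined by the next `m` steps. -/
lemma block_indep {P : Measure Ω} {X : ℕ → Ω → Γ} (hmeas : ∀ k, Measurable (X k))
    (hiid : iIndepFun X P)
    (k m : ℕ) (A : Set (Fin k → Γ)) (B : Set (Fin m → Γ)) :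
    P ((fun ω (i : Fin k) => X i ω) ⁻¹' A ∩ (fun ω (i : Fin m) => X (k + i) ω) ⁻¹' B)
      = P ((fun ω (i : Fin k) => X i ω) ⁻¹' A)
        * P ((fun ω (i : Fin m) => X (k + i) ω) ⁻¹' B) := by
  have hdisj : Disjoint (Finset.range k) (Finset.Ico k (k + m)) := by
    simp only [Finset.disjoint_left, Finset.mem_range, Finset.mem_Ico]
    omega
  have h := hiid.indepFun_finset (Finset.range k) (Finset.Ico k (k + m)) hdisj hmeas
  have h2 := h.comp
    (φ := fun (v : {x // x ∈ Finset.range k} → Γ) (i : Fin k) =>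
      v ⟨i.1, Finset.mem_range.2 i.2⟩)
    (ψ := fun (v : {x // x ∈ Finset.Ico k (k + m)} → Γ) (i : Fin m) =>
      v ⟨k + i.1, Finset.mem_Ico.2 ⟨Nat.le_add_right _ _, by omega⟩⟩)
    (measurable_of_countable _) (measurable_of_countable _)
  exact h2.measure_inter_preimage_eq_mul A B
    (meas_set_of_countable A) (meas_set_of_countable B)

/-- Finite-path product: product of the first `j` entries of a `k`-tuple. -/
def cw {k : ℕ} (v : Fin k → Γ) (j : ℕ) : Γ :=
  ((List.range j).map fun i => if h : i < k then v ⟨i, h⟩ else 1).prod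

lemma cw_eq_pw (X : ℕ → Ω → Γ) (t : ℕ) {k j : ℕ} (h : j ≤ k) (ω : Ω) :
    cw (fun i : Fin k => X (t + i) ω) j = pw X t j ω := by
  unfold cw pw
  congr 1
  apply List.map_congr_left
  intro i hi
  rw [List.mem_range] at hi
  rw [dif_pos (lt_of_lt_of_le hi h)]

open scoped Classical in
/-- `n`-step distribution of the walk (defined by left convolution). -/
def wdist (μ : Measure Γ) : ℕ → Γ → ℝ≥0∞
  | 0 => fun y => if y = 1 then 1 else 0
  | n + 1 => fun y => ∑' g : Γ, μ {g} * wdist μ n (g⁻¹ * y)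

variable {P : Measure Ω} [IsProbabilityMeasure P] {μ : Measure Γ} [IsProbabilityMeasure μ]
  {X : ℕ → Ω → Γ}

lemma law_pw (hmeas : ∀ k, Measurable (X k))
    (hiid : iIndepFun X P)
    (hlaw : ∀ k, Measure.map (X k) P = μ) :
    ∀ n j y, P {ω | pw X j n ω = y} = wdist μ n y := by
  intro n
  induction n with
  | zero =>
      intro j y
      rcases eq_or_ne y 1 with rfl | hy
      · have : {ω : Ω | pw X j 0 ω = 1} = Set.univ := by
          ext ω; simp [pw_zero]
        classical
        simp [this, wdist]
      · have : {ω : Ω | pw X j 0 ω = y} = ∅ := by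
          ext ω; simp [pw_zero, Ne.symm hy]
        classical
        simp [this, wdist, hy]
  | succ n ih =>
      intro j y
      have hset : {ω : Ω | pw X j (n + 1) ω = y}
          = ⋃ g : Γ, ({ω : Ω | X j ω = g} ∩ {ω : Ω | pw X (j + 1) n ω = g⁻¹ * y}) := by
        ext ω
        simp only [Set.mem_setOf_eq, Set.mem_iUnion, Set.mem_inter_iff, pw_succ_left]
        constructor
        · intro h
          exact ⟨X j ω, rfl, by rw [← h, inv_mul_cancel_left]⟩
        · rintro ⟨g, rfl, h2⟩
          rw [h2, mul_inv_cancel_left]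
      rw [hset, measure_iUnion]
      · have hterm : ∀ g : Γ,
            P ({ω : Ω | X j ω = g} ∩ {ω : Ω | pw X (j + 1) n ω = g⁻¹ * y})
              = μ {g} * wdist μ n (g⁻¹ * y) := by
          intro g
          have hA : {ω : Ω | X j ω = g}
              = (fun ω (i : Fin (j + 1)) => X i ω) ⁻¹'
                  {v : Fin (j + 1) → Γ | v ⟨j, Nat.lt_succ_self j⟩ = g} := rfl
          have hB : {ω : Ω | pw X (j + 1) n ω = g⁻¹ * y}
              = (fun ω (i : Fin n) => X ((j + 1) + i) ω) ⁻¹'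
                  {v : Fin n → Γ | cw v n = g⁻¹ * y} := by
            ext ω
            simp only [Set.mem_setOf_eq, Set.mem_preimage, cw_eq_pw X (j + 1) (le_refl n)]
          rw [hA, hB, block_indep hmeas hiid (j + 1) n _ _, ← hA, ← hB]
          have h1 : P {ω : Ω | X j ω = g} = μ {g} := by
            have := Measure.map_apply (hmeas j) (measurableSet_singleton g) (μ := P)
            rw [hlaw j] at this
            exact this.symm
          rw [h1, ih (j + 1) (g⁻¹ * y)]
        rw [tsum_congr hterm]
        rfl
      · intro g g' hne
        apply Set.disjoint_left.2
        rintro ω ⟨h1, _⟩ ⟨h1', _⟩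
        exact hne (h1 ▸ h1')
      · intro g
        exact ((hmeas j) (measurableSet_singleton g)).inter
          ((measurable_pw hmeas (j + 1) n) (measurableSet_singleton _))

lemma cw_eq_pw0 (X : ℕ → Ω → Γ) {k j : ℕ} (h : j ≤ k) (ω : Ω) :
    cw (fun i : Fin k => X i ω) j = pw X 0 j ω := by
  have h0 : (fun i : Fin k => X i ω) = (fun i : Fin k => X (0 + i) ω) := by
    funext i; rw [Nat.zero_add]
  rw [h0, cw_eq_pw X 0 h ω]

/-- First hit of `y` (among times in `[t, ∞)`) occurs at time `k`. -/
def fpass (X : ℕ → Ω → Γ) (t k : ℕ) (y : Γ) : Set Ω :=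
  {ω | pw X 0 k ω = y ∧ ∀ j, t ≤ j → j < k → pw X 0 j ω ≠ y}

lemma measurableSet_fpass (hmeas : ∀ k, Measurable (X k)) (t k : ℕ) (y : Γ) :
    MeasurableSet (fpass X t k y) := by
  have : fpass X t k y = {ω | pw X 0 k ω = y} ∩
      ⋂ (j : ℕ) (_ : t ≤ j) (_ : j < k), {ω | pw X 0 j ω = y}ᶜ := by
    ext ω
    simp only [fpass, Set.mem_setOf_eq, Set.mem_inter_iff, Set.mem_iInter, Set.mem_compl_iff]
  rw [this]
  exact ((measurable_pw hmeas 0 k) (measurableSet_singleton y)).inter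
    (MeasurableSet.iInter fun j => MeasurableSet.iInter fun _ =>
      MeasurableSet.iInter fun _ =>
        ((measurable_pw hmeas 0 j) (measurableSet_singleton y)).compl)

lemma fpass_disjoint {t k k' : ℕ} {y : Γ} (ht : t ≤ k) (hkk : k < k') :
    Disjoint (fpass X t k y) (fpass X t k' y) := by
  apply Set.disjoint_left.2
  rintro ω ⟨h1, _⟩ ⟨_, h2'⟩
  exact h2' k ht hkk h1

/-- First-passage decomposition with independence. -/
lemma fp_decomp (hmeas : ∀ k, Measurable (X k))
    (hiid : iIndepFun X P)
    (hlaw : ∀ k, Measure.map (X k) P = μ)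
    (t n : ℕ) (htn : t ≤ n) (y : Γ) :
    P {ω | pw X 0 n ω = y}
      = ∑ k ∈ Finset.Icc t n, P (fpass X t k y) * wdist μ (n - k) 1 := by
  have hsplit : ∀ k, k ∈ Finset.Icc t n → ∀ ω, ω ∈ fpass X t k y →
      (pw X 0 n ω = y ↔ pw X k (n - k) ω = 1) := by
    intro k hk ω hω
    rw [Finset.mem_Icc] at hk
    have h2 : pw X 0 (k + (n - k)) ω = pw X 0 k ω * pw X k (n - k) ω := by
      have := pw_add X 0 k (n - k) ω
      rwa [Nat.zero_add] at this
    have h3 : k + (n - k) = n := by omega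
    rw [h3] at h2
    rw [h2, hω.1, mul_eq_left]
  have hset : {ω | pw X 0 n ω = y}
      = ⋃ k ∈ Finset.Icc t n, (fpass X t k y ∩ {ω | pw X k (n - k) ω = 1}) := by
    ext ω
    simp only [Set.mem_setOf_eq, Set.mem_iUnion, Set.mem_inter_iff, exists_prop]
    constructor
    · intro hω
      have hQ : ∃ j, t ≤ j ∧ j ≤ n ∧ pw X 0 j ω = y := ⟨n, htn, le_refl n, hω⟩
      classical
      set k := Nat.find hQ with hkdef
      obtain ⟨hk1, hk2, hk3⟩ := Nat.find_spec hQ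
      have hfp : ω ∈ fpass X t k y := by
        refine ⟨hk3, fun j hj1 hj2 hj3 => ?_⟩
        exact Nat.find_min hQ hj2 ⟨hj1, le_trans (le_of_lt hj2) hk2, hj3⟩
      refine ⟨k, Finset.mem_Icc.2 ⟨hk1, hk2⟩, hfp, ?_⟩
      exact (hsplit k (Finset.mem_Icc.2 ⟨hk1, hk2⟩) ω hfp).1 hω
    · rintro ⟨k, hk, hfp, hone⟩
      exact (hsplit k hk ω hfp).2 hone
  rw [hset, measure_biUnion_finset]
  · apply Finset.sum_congr rfl
    intro k hk
    have hA : fpass X t k y = (fun ω (i : Fin k) => X i ω) ⁻¹'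
        {v : Fin k → Γ | cw v k = y ∧ ∀ j, t ≤ j → j < k → cw v j ≠ y} := by
      ext ω
      simp only [fpass, Set.mem_preimage, Set.mem_setOf_eq]
      constructor
      · rintro ⟨h1, h2⟩
        refine ⟨by rw [cw_eq_pw0 X (le_refl k) ω]; exact h1, fun j hj1 hj2 => ?_⟩
        rw [cw_eq_pw0 X (le_of_lt hj2) ω]
        exact h2 j hj1 hj2
      · rintro ⟨h1, h2⟩
        rw [cw_eq_pw0 X (le_refl k) ω] at h1
        refine ⟨h1, fun j hj1 hj2 => ?_⟩
        have := h2 j hj1 hj2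
        rwa [cw_eq_pw0 X (le_of_lt hj2) ω] at this
    have hB : {ω : Ω | pw X k (n - k) ω = 1}
        = (fun ω (i : Fin (n - k)) => X (k + i) ω) ⁻¹'
            {v : Fin (n - k) → Γ | cw v (n - k) = 1} := by
      ext ω
      simp only [Set.mem_setOf_eq, Set.mem_preimage]
      rw [cw_eq_pw X k (le_refl (n - k)) ω]
    rw [hA, hB, block_indep hmeas hiid k (n - k) _ _, ← hA, ← hB,
      law_pw (P := P) (μ := μ) (X := X) hmeas hiid hlaw (n - k) k 1]
  · intro k hk k' hk' hne
    have key : ∀ a b : ℕ, a ∈ Finset.Icc t n → a < b →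
        Disjoint (fpass X t a y ∩ {ω | pw X a (n - a) ω = 1})
          (fpass X t b y ∩ {ω | pw X b (n - b) ω = 1}) := by
      intro a b ha hab
      exact Disjoint.mono Set.inter_subset_left Set.inter_subset_left
        (fpass_disjoint (Finset.mem_Icc.1 ha).1 hab)
    rcases lt_or_gt_of_ne hne with h | h
    · exact key k k' hk h
    · exact (key k' k hk' h).symm
  · intro k hk
    exact (measurableSet_fpass hmeas t k y).inter
      ((measurable_pw hmeas k (n - k)) (measurableSet_singleton 1))

lemma walk_eq_pw (x : Γ) (X : ℕ → Ω → Γ) (n : ℕ) (ω : Ω) : walk x X n ω = x * pw X 0 n ω := by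
  simp [walk, pw]

lemma tsum_meas_singleton (ν : Measure Γ) [IsProbabilityMeasure ν] : ∑' g : Γ, ν {g} = 1 := by
  rw [← measure_univ (μ := ν), ← Set.iUnion_of_singleton Γ,
    measure_iUnion (fun g g' h => by simpa using h) (fun g => measurableSet_singleton g)]

lemma wdist_sum_one (μ : Measure Γ) [IsProbabilityMeasure μ] (n : ℕ) :
    ∑' y : Γ, wdist μ n y = 1 := by
  induction n with
  | zero => classical simpa [wdist] using tsum_ite_eq (1 : Γ) (1 : ℝ≥0∞)
  | succ n ih =>
      show ∑' y : Γ, ∑' g : Γ, μ {g} * wdist μ n (g⁻¹ * y) = 1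
      rw [ENNReal.tsum_comm]
      calc ∑' g : Γ, ∑' y : Γ, μ {g} * wdist μ n (g⁻¹ * y)
          = ∑' g : Γ, μ {g} * ∑' y : Γ, wdist μ n (g⁻¹ * y) := by
            exact tsum_congr fun g => ENNReal.tsum_mul_left
        _ = ∑' g : Γ, μ {g} := by
            refine tsum_congr fun g => ?_
            rw [show (∑' y : Γ, wdist μ n (g⁻¹ * y)) = ∑' y : Γ, wdist μ n y from
              (Equiv.mulLeft g⁻¹).tsum_eq (wdist μ n), ih, mul_one]
        _ = 1 := tsum_meas_singleton μ

lemma wdist_le_one (μ : Measure Γ) [IsProbabilityMeasure μ] (n : ℕ) (y : Γ) :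
    wdist μ n y ≤ 1 := by
  rw [← wdist_sum_one μ n]
  exact ENNReal.le_tsum y

lemma wdist_succ_ge (μ : Measure Γ) (n : ℕ) (g : Γ) (y : Γ) :
    μ {g} * wdist μ n (g⁻¹ * y) ≤ wdist μ (n + 1) y :=
  ENNReal.le_tsum g

lemma ennreal_cauchy (a b : ℕ → ℝ≥0∞) :
    (∑' k : ℕ, a k) * (∑' m : ℕ, b m)
      = ∑' n : ℕ, ∑ k ∈ Finset.range (n + 1), a k * b (n - k) := by
  calc (∑' k : ℕ, a k) * (∑' m : ℕ, b m)
      = ∑' k : ℕ, a k * ∑' m : ℕ, b m := ENNReal.tsum_mul_right.symm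
    _ = ∑' k : ℕ, ∑' m : ℕ, a k * b m := tsum_congr fun k => ENNReal.tsum_mul_left.symm
    _ = ∑' p : ℕ × ℕ, a p.1 * b p.2 := ENNReal.tsum_prod.symm
    _ = ∑' q : (Σ n : ℕ, (Finset.HasAntidiagonal.antidiagonal n : Finset (ℕ × ℕ))),
          a (Finset.HasAntidiagonal.sigmaAntidiagonalEquivProd q).1
            * b (Finset.HasAntidiagonal.sigmaAntidiagonalEquivProd q).2 :=
        (Finset.HasAntidiagonal.sigmaAntidiagonalEquivProd.tsum_eq fun p : ℕ × ℕ => a p.1 * b p.2).symm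
    _ = ∑' n : ℕ, ∑' kl : (Finset.HasAntidiagonal.antidiagonal n : Finset (ℕ × ℕ)),
          a (kl : ℕ × ℕ).1 * b (kl : ℕ × ℕ).2 :=
        ENNReal.tsum_sigma (fun n (kl : (Finset.HasAntidiagonal.antidiagonal n : Finset (ℕ × ℕ))) =>
          a (kl : ℕ × ℕ).1 * b (kl : ℕ × ℕ).2)
    _ = ∑' n : ℕ, ∑ kl ∈ Finset.HasAntidiagonal.antidiagonal n, a kl.1 * b kl.2 :=
        tsum_congr fun n => Finset.tsum_subtype _ fun kl : ℕ × ℕ => a kl.1 * b kl.2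
    _ = ∑' n : ℕ, ∑ k ∈ Finset.range (n + 1), a k * b (n - k) :=
        tsum_congr fun n => Finset.Nat.sum_antidiagonal_eq_sum_range_succ_mk _ n

lemma hit_decomp (hmeas : ∀ k, Measurable (X k)) (t : ℕ) (y : Γ) :
    P {ω | ∃ n, t ≤ n ∧ pw X 0 n ω = y} = ∑' k : ℕ, P (fpass X t (t + k) y) := by
  have hset : {ω | ∃ n, t ≤ n ∧ pw X 0 n ω = y} = ⋃ k : ℕ, fpass X t (t + k) y := by
    ext ω
    simp only [Set.mem_setOf_eq, Set.mem_iUnion]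
    constructor
    · rintro hQ
      classical
      obtain ⟨hk1, hk3⟩ := Nat.find_spec hQ
      refine ⟨Nat.find hQ - t, ?_⟩
      have hteq : t + (Nat.find hQ - t) = Nat.find hQ := by omega
      rw [hteq]
      refine ⟨hk3, fun j hj1 hj2 hj3 => ?_⟩
      exact Nat.find_min hQ hj2 ⟨hj1, hj3⟩
    · rintro ⟨k, hk⟩
      exact ⟨t + k, Nat.le_add_right t k, hk.1⟩
  rw [hset, measure_iUnion]
  · intro k k' hne
    have key : ∀ a b : ℕ, a < b →
        Disjoint (fpass X t (t + a) y) (fpass X t (t + b) y) := by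
      intro a b hab
      exact fpass_disjoint (Nat.le_add_right t a) (by omega)
    rcases lt_or_gt_of_ne hne with h | h
    · exact key k k' h
    · exact (key k' k h).symm
  · exact fun k => measurableSet_fpass hmeas t (t + k) y

lemma hitProb_one_eq (hmeas : ∀ k, Measurable (X k)) (y : Γ) :
    hitProb P X 1 y = ∑' k : ℕ, P (fpass X 0 k y) := by
  have h1 : {ω | ∃ n : ℕ, walk 1 X n ω = y} = {ω | ∃ n, 0 ≤ n ∧ pw X 0 n ω = y} := by
    ext ω
    simp [walk_eq_pw]
  rw [hitProb, h1, hit_decomp hmeas 0 y]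
  exact tsum_congr fun k => by rw [Nat.zero_add]

lemma greenFn_shift (x y : Γ) : greenFn P X x y = greenFn P X 1 (x⁻¹ * y) := by
  refine tsum_congr fun n => ?_
  congr 1
  ext ω
  simp only [Set.mem_setOf_eq, walk_eq_pw, one_mul]
  constructor
  · intro h; rw [← h, inv_mul_cancel_left]
  · intro h; rw [h, mul_inv_cancel_left]

lemma greenFn_one_eq (hmeas : ∀ k, Measurable (X k))
    (hiid : iIndepFun X P)
    (hlaw : ∀ k, Measure.map (X k) P = μ) (y : Γ) :
    greenFn P X 1 y = ∑' n : ℕ, wdist μ n y := by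
  refine tsum_congr fun n => ?_
  have h1 : {ω | walk 1 X n ω = y} = {ω | pw X 0 n ω = y} := by
    ext ω; simp [walk_eq_pw]
  rw [h1, law_pw (P := P) (μ := μ) (X := X) hmeas hiid hlaw n 0 y]

/-- `G(e,y) = F(e,y) G(e,e)`. -/
lemma greenFn_eq_hit_mul (hmeas : ∀ k, Measurable (X k))
    (hiid : iIndepFun X P)
    (hlaw : ∀ k, Measure.map (X k) P = μ) (y : Γ) :
    greenFn P X 1 y = hitProb P X 1 y * greenFn P X 1 1 := by
  rw [hitProb_one_eq hmeas y, greenFn_one_eq hmeas hiid hlaw 1, ennreal_cauchy,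
    greenFn_one_eq hmeas hiid hlaw y]
  refine tsum_congr fun n => ?_
  rw [← law_pw (P := P) (μ := μ) (X := X) hmeas hiid hlaw n 0 y,
    fp_decomp (P := P) (μ := μ) (X := X) hmeas hiid hlaw 0 n (Nat.zero_le n) y]
  have : Finset.Icc 0 n = Finset.range (n + 1) := by
    rw [← Finset.Ico_add_one_right_eq_Icc, ← Finset.range_eq_Ico]
  rw [this]

lemma greenFn_one_ne_top (hmeas : ∀ k, Measurable (X k))
    (hiid : iIndepFun X P)
    (hlaw : ∀ k, Measure.map (X k) P = μ)
    (htrans : P {ω | ∃ n ≥ 1, walk 1 X n ω = 1} < 1) :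
    greenFn P X 1 1 ≠ ∞ := by
  classical
  set a : ℕ → ℝ≥0∞ := fun k => P (fpass X 1 k 1) with ha
  set R : ℝ≥0∞ := ∑' k : ℕ, a (1 + k) with hRdef
  have hRlt : R < 1 := by
    have h1 : R = P {ω | ∃ n, 1 ≤ n ∧ pw X 0 n ω = 1} :=
      (hit_decomp (P := P) hmeas 1 1).symm
    have h2 : {ω | ∃ n, 1 ≤ n ∧ pw X 0 n ω = 1} = {ω | ∃ n ≥ 1, walk 1 X n ω = 1} := by
      ext ω
      simp [walk_eq_pw, ge_iff_le]
    rw [h1, h2]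
    exact htrans
  have hRne : R ≠ ∞ := (hRlt.trans ENNReal.one_lt_top).ne
  set GN : ℕ → ℝ≥0∞ := fun N => ∑ m ∈ Finset.range (N + 1), wdist μ m 1 with hGN
  have hGNfin : ∀ N, GN N ≠ ∞ := by
    intro N
    refine (ENNReal.sum_lt_top.2 fun m _ => ?_).ne
    exact lt_of_le_of_lt (wdist_le_one μ m 1) ENNReal.one_lt_top
  have key : ∀ N, GN N ≤ 1 + R * GN N := by
    intro N
    have hsplit : GN N = wdist μ 0 1 + ∑ n ∈ Finset.Icc 1 N, wdist μ n 1 := by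
      rw [hGN]
      simp only
      rw [Finset.range_eq_Ico, Finset.sum_eq_sum_Ico_succ_bot (Nat.succ_pos N),
        Nat.succ_eq_add_one, Finset.Ico_add_one_right_eq_Icc]
    have hw0 : wdist μ 0 1 = 1 := by simp [wdist]
    have hterm : ∀ n ∈ Finset.Icc 1 N, wdist μ n 1
        = ∑' k : ℕ, (if 1 ≤ k ∧ k ≤ n then a k * wdist μ (n - k) 1 else 0) := by
      intro n hn
      rw [Finset.mem_Icc] at hn
      rw [← law_pw (P := P) (μ := μ) (X := X) hmeas hiid hlaw n 0 1,
        fp_decomp (P := P) (μ := μ) (X := X) hmeas hiid hlaw 1 n hn.1 1]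
      rw [tsum_eq_sum (s := Finset.Icc 1 n)
        (fun k hk => by rw [if_neg (by simpa [Finset.mem_Icc] using hk)])]
      refine Finset.sum_congr rfl fun k hk => ?_
      rw [Finset.mem_Icc] at hk
      rw [if_pos hk]
    have hbound : ∑ n ∈ Finset.Icc 1 N, wdist μ n 1 ≤ R * GN N := by
      rw [Finset.sum_congr rfl hterm, ← Summable.tsum_finsetSum (fun n _ => ENNReal.summable)]
      have hinner : ∀ k : ℕ,
          (∑ n ∈ Finset.Icc 1 N, if 1 ≤ k ∧ k ≤ n then a k * wdist μ (n - k) 1 else 0)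
            ≤ (if 1 ≤ k then a k else 0) * GN N := by
        intro k
        rcases Nat.eq_zero_or_pos k with rfl | hk
        · simp
        rw [if_pos (by omega : 1 ≤ k)]
        have hrw : ∀ n, (if 1 ≤ k ∧ k ≤ n then a k * wdist μ (n - k) 1 else 0)
            = a k * (if k ≤ n then wdist μ (n - k) 1 else 0) := by
          intro n
          by_cases h : k ≤ n
          · rw [if_pos ⟨hk, h⟩, if_pos h]
          · rw [if_neg (fun hc => h hc.2), if_neg h, mul_zero]
        rw [Finset.sum_congr rfl fun n _ => hrw n, ← Finset.mul_sum]
        refine mul_le_mul_right ?_ (a k)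
        rw [← Finset.sum_filter]
        calc ∑ n ∈ (Finset.Icc 1 N).filter (fun n => k ≤ n), wdist μ (n - k) 1
            ≤ ∑ n ∈ Finset.Icc k N, wdist μ (n - k) 1 := by
              refine Finset.sum_le_sum_of_subset fun n hn => ?_
              simp only [Finset.mem_filter, Finset.mem_Icc] at hn ⊢
              omega
          _ = ∑ i ∈ Finset.range (N + 1 - k), wdist μ (k + i - k) 1 := by
              rw [← Finset.Ico_add_one_right_eq_Icc, Finset.sum_Ico_eq_sum_range]
          _ = ∑ i ∈ Finset.range (N + 1 - k), wdist μ i 1 := by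
              refine Finset.sum_congr rfl fun i _ => by congr 1; omega
          _ ≤ GN N := Finset.sum_le_sum_of_subset
              (Finset.range_subset_range.2 (by omega))
      refine le_trans (ENNReal.tsum_le_tsum hinner) ?_
      rw [ENNReal.tsum_mul_right]
      refine mul_le_mul_left (le_of_eq ?_) (GN N)
      have hsupp : Function.support (fun k : ℕ => if 1 ≤ k then a k else 0)
          ⊆ Set.range Nat.succ := by
        intro k hk
        rcases Nat.eq_zero_or_pos k with rfl | h
        · simp at hk
        · exact ⟨k - 1, by omega⟩
      rw [← Function.Injective.tsum_eq Nat.succ_injective hsupp]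
      refine tsum_congr fun k => ?_
      rw [if_pos (Nat.succ_le_succ (Nat.zero_le k))]
      congr 1
      omega
    calc GN N = wdist μ 0 1 + ∑ n ∈ Finset.Icc 1 N, wdist μ n 1 := hsplit
      _ ≤ 1 + R * GN N := by rw [hw0]; exact add_le_add_right hbound 1
  -- numeric bound
  have hbnd : ∀ N, GN N ≤ ENNReal.ofReal (1 / (1 - R.toReal)) := by
    intro N
    have hr1 : R.toReal < 1 := by
      rw [← ENNReal.toReal_one]
      exact (ENNReal.toReal_lt_toReal hRne ENNReal.one_ne_top).2 hRlt
    have h1r : 0 < 1 - R.toReal := by linarith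
    have hgle : (GN N).toReal ≤ 1 + R.toReal * (GN N).toReal := by
      have hfin : (1 : ℝ≥0∞) + R * GN N ≠ ∞ := by
        exact ENNReal.add_ne_top.2 ⟨ENNReal.one_ne_top, ENNReal.mul_ne_top hRne (hGNfin N)⟩
      have := ENNReal.toReal_mono hfin (key N)
      rwa [ENNReal.toReal_add ENNReal.one_ne_top (ENNReal.mul_ne_top hRne (hGNfin N)),
        ENNReal.toReal_mul, ENNReal.toReal_one] at this
    have hgb : (GN N).toReal ≤ 1 / (1 - R.toReal) := by
      rw [le_div_iff₀ h1r]
      nlinarith [ENNReal.toReal_nonneg (a := GN N), ENNReal.toReal_nonneg (a := R)]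
    calc GN N = ENNReal.ofReal (GN N).toReal := (ENNReal.ofReal_toReal (hGNfin N)).symm
      _ ≤ ENNReal.ofReal (1 / (1 - R.toReal)) := ENNReal.ofReal_le_ofReal hgb
  rw [greenFn_one_eq hmeas hiid hlaw 1]
  refine ne_top_of_le_ne_top (by simp : ENNReal.ofReal (1 / (1 - R.toReal)) ≠ ∞) ?_
  rw [ENNReal.tsum_eq_iSup_nat]
  refine iSup_le fun N => le_trans ?_ (hbnd N)
  exact Finset.sum_le_sum_of_subset (Finset.range_subset_range.2 (Nat.le_succ N))

/-- `L(t) = max(0, -ln t)` as an extended real. -/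
def Lf (t : ℝ≥0∞) : ℝ≥0∞ := ENNReal.ofReal (-Real.log t.toReal)

lemma Lf_mul_le {a b : ℝ≥0∞} (ha : a ≤ 1) (hb : b ≤ 1) : Lf (a * b) ≤ Lf a + Lf b := by
  rcases eq_or_ne a 0 with rfl | ha0
  · simp [Lf]
  rcases eq_or_ne b 0 with rfl | hb0
  · simp [Lf]
  have hat : a ≠ ∞ := (lt_of_le_of_lt ha ENNReal.one_lt_top).ne
  have hbt : b ≠ ∞ := (lt_of_le_of_lt hb ENNReal.one_lt_top).ne
  have hap : 0 < a.toReal := ENNReal.toReal_pos ha0 hat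
  have hbp : 0 < b.toReal := ENNReal.toReal_pos hb0 hbt
  rw [Lf, ENNReal.toReal_mul, Real.log_mul (ne_of_gt hap) (ne_of_gt hbp), neg_add]
  exact ENNReal.ofReal_add_le

lemma mul_Lf_le {a b : ℝ≥0∞} (hab : a ≤ b) (hb : b ≤ 1) : a * Lf b ≤ a * Lf a := by
  rcases eq_or_ne a 0 with rfl | ha0
  · simp
  have hbt : b ≠ ∞ := (lt_of_le_of_lt hb ENNReal.one_lt_top).ne
  have hat : a ≠ ∞ := fun h => hbt (top_le_iff.1 (h ▸ hab))
  refine mul_le_mul_right (ENNReal.ofReal_le_ofReal (neg_le_neg ?_)) a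
  exact Real.log_le_log (ENNReal.toReal_pos ha0 hat) (ENNReal.toReal_mono hbt hab)

def entW (μ : Measure Γ) (n : ℕ) : ℝ≥0∞ := ∑' y : Γ, wdist μ n y * Lf (wdist μ n y)

def entM (μ : Measure Γ) : ℝ≥0∞ := ∑' g : Γ, μ {g} * Lf (μ {g})

lemma entM_ne_top (μ : Measure Γ) [IsProbabilityMeasure μ]
    (hent : Summable fun g : Γ => Real.negMulLog (μ {g}).toReal) : entM μ ≠ ∞ := by
  have hterm : ∀ g : Γ, μ {g} * Lf (μ {g}) = ENNReal.ofReal (Real.negMulLog (μ {g}).toReal) := by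
    intro g
    have hfin : μ {g} ≠ ∞ := measure_ne_top μ {g}
    have hx : (0:ℝ) ≤ (μ {g}).toReal := ENNReal.toReal_nonneg
    conv_lhs => rw [← ENNReal.ofReal_toReal hfin]
    simp only [Lf, ENNReal.toReal_ofReal hx]
    rw [← ENNReal.ofReal_mul hx]
    congr 1
    rw [Real.negMulLog]
    ring
  have h1 : ∀ g : Γ, (μ {g}).toReal ≤ 1 := by
    intro g
    exact ENNReal.toReal_le_of_le_ofReal zero_le_one (by simpa using prob_le_one (μ := μ))
  rw [entM, tsum_congr hterm,
    ← ENNReal.ofReal_tsum_of_nonneg (fun g => Real.negMulLog_nonneg ENNReal.toReal_nonneg (h1 g))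
      hent]
  exact ENNReal.ofReal_ne_top

lemma entW_zero (μ : Measure Γ) : entW μ 0 = 0 := by
  classical
  rw [entW]
  convert tsum_zero with y
  by_cases hy : y = 1
  · subst hy; simp [wdist, Lf]
  · simp [wdist, hy]

lemma entW_succ_le (μ : Measure Γ) [IsProbabilityMeasure μ] (n : ℕ) :
    entW μ (n + 1) ≤ entM μ + entW μ n := by
  have hw' : ∀ y : Γ, wdist μ (n + 1) y = ∑' g : Γ, μ {g} * wdist μ n (g⁻¹ * y) := fun y => rfl
  have hstep : ∀ y : Γ, wdist μ (n + 1) y * Lf (wdist μ (n + 1) y)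
      ≤ ∑' g : Γ, μ {g} * wdist μ n (g⁻¹ * y) * (Lf (μ {g}) + Lf (wdist μ n (g⁻¹ * y))) := by
    intro y
    calc wdist μ (n + 1) y * Lf (wdist μ (n + 1) y)
        = ∑' g : Γ, μ {g} * wdist μ n (g⁻¹ * y) * Lf (wdist μ (n + 1) y) := by
          rw [ENNReal.tsum_mul_right, ← hw' y]
      _ ≤ ∑' g : Γ, μ {g} * wdist μ n (g⁻¹ * y) * (Lf (μ {g}) + Lf (wdist μ n (g⁻¹ * y))) := by
          refine ENNReal.tsum_le_tsum fun g => ?_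
          refine le_trans (mul_Lf_le ?_ (wdist_le_one μ (n + 1) y)) ?_
          · rw [hw' y]
            exact ENNReal.le_tsum g
          · exact mul_le_mul_right (Lf_mul_le (prob_le_one) (wdist_le_one μ n _)) _
  calc entW μ (n + 1)
      ≤ ∑' y : Γ, ∑' g : Γ, μ {g} * wdist μ n (g⁻¹ * y) * (Lf (μ {g}) + Lf (wdist μ n (g⁻¹ * y)))
        := ENNReal.tsum_le_tsum hstep
    _ = ∑' g : Γ, ∑' y : Γ, μ {g} * wdist μ n (g⁻¹ * y) * (Lf (μ {g}) + Lf (wdist μ n (g⁻¹ * y)))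
        := ENNReal.tsum_comm
    _ = ∑' g : Γ, (μ {g} * Lf (μ {g}) * ∑' y : Γ, wdist μ n (g⁻¹ * y)
          + μ {g} * ∑' y : Γ, wdist μ n (g⁻¹ * y) * Lf (wdist μ n (g⁻¹ * y))) := by
        refine tsum_congr fun g => ?_
        calc ∑' y : Γ, μ {g} * wdist μ n (g⁻¹ * y) * (Lf (μ {g}) + Lf (wdist μ n (g⁻¹ * y)))
            = ∑' y : Γ, (μ {g} * Lf (μ {g}) * wdist μ n (g⁻¹ * y)
                + μ {g} * (wdist μ n (g⁻¹ * y) * Lf (wdist μ n (g⁻¹ * y)))) :=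
              tsum_congr fun y => by ring
          _ = μ {g} * Lf (μ {g}) * ∑' y : Γ, wdist μ n (g⁻¹ * y)
                + μ {g} * ∑' y : Γ, wdist μ n (g⁻¹ * y) * Lf (wdist μ n (g⁻¹ * y)) := by
              rw [ENNReal.tsum_add, ENNReal.tsum_mul_left, ENNReal.tsum_mul_left]
    _ = ∑' g : Γ, (μ {g} * Lf (μ {g}) + μ {g} * entW μ n) := by
        refine tsum_congr fun g => ?_
        have e1 : ∑' y : Γ, wdist μ n (g⁻¹ * y) = 1 := by
          rw [show (∑' y : Γ, wdist μ n (g⁻¹ * y)) = ∑' y : Γ, wdist μ n y from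
            (Equiv.mulLeft g⁻¹).tsum_eq (wdist μ n), wdist_sum_one μ n]
        have e2 : ∑' y : Γ, wdist μ n (g⁻¹ * y) * Lf (wdist μ n (g⁻¹ * y)) = entW μ n :=
          (Equiv.mulLeft g⁻¹).tsum_eq fun z => wdist μ n z * Lf (wdist μ n z)
        rw [e1, e2, mul_one]
    _ = entM μ + entW μ n := by
        rw [ENNReal.tsum_add, ENNReal.tsum_mul_right, tsum_meas_singleton μ, one_mul, entM]

lemma entW_ne_top (μ : Measure Γ) [IsProbabilityMeasure μ]
    (hent : Summable fun g : Γ => Real.negMulLog (μ {g}).toReal) (n : ℕ) : entW μ n ≠ ∞ := by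
  induction n with
  | zero => rw [entW_zero]; exact ENNReal.zero_ne_top
  | succ n ih =>
      exact ne_top_of_le_ne_top (ENNReal.add_ne_top.2 ⟨entM_ne_top μ hent, ih⟩) (entW_succ_le μ n)

lemma lint_pw (hmeas : ∀ k, Measurable (X k))
    (hiid : iIndepFun X P)
    (hlaw : ∀ k, Measure.map (X k) P = μ) (m : ℕ) (h : Γ → ℝ≥0∞) :
    ∫⁻ ω, h (pw X 0 m ω) ∂P = ∑' y : Γ, wdist μ m y * h y := by
  rw [← lintegral_map (measurable_of_countable h) (measurable_pw hmeas 0 m),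
    lintegral_countable' h]
  refine tsum_congr fun y => ?_
  rw [Measure.map_apply (measurable_pw hmeas 0 m) (measurableSet_singleton y),
    mul_comm]
  congr 1
  exact law_pw (P := P) (μ := μ) (X := X) hmeas hiid hlaw m 0 y

lemma int_pw (hmeas : ∀ k, Measurable (X k))
    (hiid : iIndepFun X P)
    (hlaw : ∀ k, Measure.map (X k) P = μ) (m : ℕ) (h : Γ → ℝ) (h0 : ∀ y, 0 ≤ h y)
    (hfin : (∑' y : Γ, wdist μ m y * ENNReal.ofReal (h y)) ≠ ∞) :
    Integrable (fun ω => h (pw X 0 m ω)) P ∧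
      ∫ ω, h (pw X 0 m ω) ∂P = (∑' y : Γ, wdist μ m y * ENNReal.ofReal (h y)).toReal := by
  have haesm : AEStronglyMeasurable (fun ω => h (pw X 0 m ω)) P :=
    ((measurable_of_countable h).comp (measurable_pw hmeas 0 m)).aestronglyMeasurable
  have hlint : ∫⁻ ω, ENNReal.ofReal (h (pw X 0 m ω)) ∂P
      = ∑' y : Γ, wdist μ m y * ENNReal.ofReal (h y) :=
    lint_pw hmeas hiid hlaw m (fun y => ENNReal.ofReal (h y))
  constructor
  · refine ⟨haesm, ?_⟩
    rw [hasFiniteIntegral_iff_ofReal (ae_of_all _ fun ω => h0 _)]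
    rw [hlint]
    exact hfin.lt_top
  · rw [integral_eq_lintegral_of_nonneg_ae (ae_of_all _ fun ω => h0 _) haesm, hlint]

lemma greenDist_nonneg (y : Γ) : 0 ≤ greenDist P X 1 y := by
  rw [greenDist, neg_nonneg]
  refine Real.log_nonpos ENNReal.toReal_nonneg ?_
  calc (hitProb P X 1 y).toReal ≤ (1 : ℝ≥0∞).toReal :=
        ENNReal.toReal_mono ENNReal.one_ne_top prob_le_one
    _ = 1 := ENNReal.toReal_one

lemma hit_ge (hmeas : ∀ k, Measurable (X k))
    (hiid : iIndepFun X P)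
    (hlaw : ∀ k, Measure.map (X k) P = μ) (m : ℕ) (y : Γ) :
    wdist μ m y ≤ hitProb P X 1 y := by
  rw [← law_pw (P := P) (μ := μ) (X := X) hmeas hiid hlaw m 0 y]
  refine measure_mono fun ω hω => ?_
  exact ⟨m, by rw [walk_eq_pw, one_mul]; exact hω⟩

lemma Iv_le_entW (hmeas : ∀ k, Measurable (X k))
    (hiid : iIndepFun X P)
    (hlaw : ∀ k, Measure.map (X k) P = μ) (m : ℕ) :
    (∑' y : Γ, wdist μ m y * ENNReal.ofReal (greenDist P X 1 y)) ≤ entW μ m := by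
  refine ENNReal.tsum_le_tsum fun y => ?_
  rcases eq_or_ne (wdist μ m y) 0 with h0 | h0
  · simp [h0]
  refine mul_le_mul_right ?_ _
  rw [greenDist, Lf]
  refine ENNReal.ofReal_le_ofReal (neg_le_neg ?_)
  refine Real.log_le_log (ENNReal.toReal_pos h0
    (lt_of_le_of_lt (wdist_le_one μ m y) ENNReal.one_lt_top).ne) ?_
  exact ENNReal.toReal_mono (lt_of_le_of_lt prob_le_one ENNReal.one_lt_top).ne
    (hit_ge hmeas hiid hlaw m y)

lemma greenFn_one_ge_one : (1:ℝ≥0∞) ≤ greenFn P X 1 1 := by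
  have h0 : P {ω | walk 1 X 0 ω = 1} = 1 := by
    have : {ω : Ω | walk 1 X 0 ω = 1} = Set.univ := by
      ext ω
      simp [walk_eq_pw, pw_zero]
    rw [this, measure_univ]
  calc (1:ℝ≥0∞) = P {ω | walk 1 X 0 ω = 1} := h0.symm
    _ ≤ greenFn P X 1 1 := ENNReal.le_tsum 0

lemma martin_key (hmeas : ∀ k, Measurable (X k))
    (hiid : iIndepFun X P)
    (hlaw : ∀ k, Measure.map (X k) P = μ)
    (htrans : P {ω | ∃ n ≥ 1, walk 1 X n ω = 1} < 1)
    (n : ℕ) (g y : Γ) (hg : μ {g⁻¹} ≠ 0) (hy : wdist μ n y ≠ 0) :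
    - Real.log (martinK P X g y) = greenDist P X 1 (g⁻¹ * y) - greenDist P X 1 y := by
  have hcfin : greenFn P X 1 1 ≠ ∞ := greenFn_one_ne_top (P := P) (μ := μ) (X := X) hmeas hiid hlaw htrans
  have hc0 : greenFn P X 1 1 ≠ 0 := fun h => by
    simpa [h] using greenFn_one_ge_one (P := P) (X := X)
  have hFfin : ∀ z : Γ, hitProb P X 1 z ≠ ∞ :=
    fun z => (lt_of_le_of_lt prob_le_one ENNReal.one_lt_top).ne
  have hFy0 : hitProb P X 1 y ≠ 0 := by
    intro h
    exact hy (le_antisymm (h ▸ hit_ge hmeas hiid hlaw n y) (zero_le))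
  have hFgy0 : hitProb P X 1 (g⁻¹ * y) ≠ 0 := by
    intro h
    have hle : μ {g⁻¹} * wdist μ n y ≤ wdist μ (n + 1) (g⁻¹ * y) := by
      have := ENNReal.le_tsum (f := fun x : Γ => μ {x} * wdist μ n (x⁻¹ * (g⁻¹ * y))) g⁻¹
      simpa [inv_mul_cancel_left, wdist] using this
    have h2 : wdist μ (n + 1) (g⁻¹ * y) = 0 :=
      le_antisymm (h ▸ hit_ge hmeas hiid hlaw (n + 1) (g⁻¹ * y)) (zero_le)
    rw [h2] at hle
    rcases (mul_eq_zero.1 (le_antisymm hle (zero_le))) with h3 | h3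
    · exact hg h3
    · exact hy h3
  have hGy : greenFn P X 1 y = hitProb P X 1 y * greenFn P X 1 1 :=
    greenFn_eq_hit_mul (P := P) (μ := μ) (X := X) hmeas hiid hlaw y
  have hGgy : greenFn P X g y = hitProb P X 1 (g⁻¹ * y) * greenFn P X 1 1 := by
    rw [greenFn_shift g y]
    exact greenFn_eq_hit_mul (P := P) (μ := μ) (X := X) hmeas hiid hlaw (g⁻¹ * y)
  have hA : 0 < (hitProb P X 1 (g⁻¹ * y)).toReal := ENNReal.toReal_pos hFgy0 (hFfin _)
  have hB : 0 < (hitProb P X 1 y).toReal := ENNReal.toReal_pos hFy0 (hFfin _)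
  have hC : 0 < (greenFn P X 1 1).toReal := ENNReal.toReal_pos hc0 hcfin
  rw [martinK, hGy, hGgy, ENNReal.toReal_mul, ENNReal.toReal_mul, greenDist, greenDist,
    Real.log_div (by positivity) (by positivity), Real.log_mul (ne_of_gt hA) (ne_of_gt hC),
    Real.log_mul (ne_of_gt hB) (ne_of_gt hC)]
  ring

lemma ae_wdist_pos (hmeas : ∀ k, Measurable (X k))
    (hiid : iIndepFun X P)
    (hlaw : ∀ k, Measure.map (X k) P = μ) (n : ℕ) :
    ∀ᵐ ω ∂P, wdist μ n (pw X 0 n ω) ≠ 0 := by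
  rw [ae_iff]
  have hsub : {ω : Ω | ¬ wdist μ n (pw X 0 n ω) ≠ 0}
      ⊆ ⋃ y : {y : Γ // wdist μ n y = 0}, {ω : Ω | pw X 0 n ω = y.1} := by
    intro ω hω
    simp only [Set.mem_setOf_eq, not_not] at hω
    exact Set.mem_iUnion.2 ⟨⟨pw X 0 n ω, hω⟩, rfl⟩
  refine measure_mono_null hsub ?_
  rw [measure_iUnion_null_iff]
  intro y
  rw [law_pw (P := P) (μ := μ) (X := X) hmeas hiid hlaw n 0 y.1]
  exact y.2

lemma walk_one_pw (X : ℕ → Ω → Γ) (n : ℕ) (ω : Ω) : walk 1 X n ω = pw X 0 n ω := by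
  rw [walk_eq_pw, one_mul]

theorem main_statement
    (hmeas : ∀ k, Measurable (X k))
    (hiid : iIndepFun X P)
    (hlaw : ∀ k, Measure.map (X k) P = μ)
    (htrans : P {ω | ∃ n ≥ 1, walk 1 X n ω = 1} < 1)
    (hent : Summable fun g : Γ => Real.negMulLog (μ {g}).toReal) :
    ∀ n : ℕ,
      ∫ ω, (greenDist P X 1 (walk 1 X (n + 1) ω)
              - greenDist P X 1 (walk 1 X n ω)) ∂P
        = ∑' g : Γ, (μ {g⁻¹}).toReal *
            ∫ ω, - Real.log (martinK P X g (walk 1 X n ω)) ∂P := by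
  intro n
  set gd : Γ → ℝ := fun y => greenDist P X 1 y with hgd
  set Iv : ℕ → ℝ≥0∞ := fun m => ∑' y : Γ, wdist μ m y * ENNReal.ofReal (gd y) with hIv
  set Jv : Γ → ℝ≥0∞ :=
    fun g => ∑' y : Γ, wdist μ n y * ENNReal.ofReal (gd (g⁻¹ * y)) with hJv
  have h0 : ∀ y, 0 ≤ gd y := fun y => greenDist_nonneg y
  have hIvfin : ∀ m, Iv m ≠ ∞ := fun m =>
    ne_top_of_le_ne_top (entW_ne_top μ hent m) (Iv_le_entW hmeas hiid hlaw m)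
  have hint : ∀ m, Integrable (fun ω => gd (pw X 0 m ω)) P ∧
      ∫ ω, gd (pw X 0 m ω) ∂P = (Iv m).toReal := fun m =>
    int_pw hmeas hiid hlaw m gd h0 (hIvfin m)
  have hstep_ge : ∀ (g y : Γ), μ {g⁻¹} * wdist μ n y ≤ wdist μ (n + 1) (g⁻¹ * y) := by
    intro g y
    have := ENNReal.le_tsum (f := fun x : Γ => μ {x} * wdist μ n (x⁻¹ * (g⁻¹ * y))) g⁻¹
    simpa [inv_mul_cancel_left, wdist] using this
  -- the key combinatorial identity
  have hsumJ : ∑' g : Γ, μ {g⁻¹} * Jv g = Iv (n + 1) := by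
    have e1 : (∑' g : Γ, μ {(g⁻¹)⁻¹} * Jv (g⁻¹)) = ∑' g : Γ, μ {g⁻¹} * Jv g :=
      (Equiv.inv Γ).tsum_eq (fun g => μ {g⁻¹} * Jv g)
    rw [← e1]
    have e2 : ∀ g : Γ, Jv g⁻¹ = ∑' z : Γ, wdist μ n (g⁻¹ * z) * ENNReal.ofReal (gd z) := by
      intro g
      have h3 := (Equiv.mulLeft g).tsum_eq
        (fun z => wdist μ n (g⁻¹ * z) * ENNReal.ofReal (gd z))
      rw [← h3, hJv]
      refine tsum_congr fun y => ?_
      simp [inv_inv, inv_mul_cancel_left]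
    calc ∑' g : Γ, μ {(g⁻¹)⁻¹} * Jv g⁻¹
        = ∑' g : Γ, ∑' z : Γ, μ {g} * (wdist μ n (g⁻¹ * z) * ENNReal.ofReal (gd z)) := by
          refine tsum_congr fun g => ?_
          rw [inv_inv, e2 g, ENNReal.tsum_mul_left]
      _ = ∑' z : Γ, ∑' g : Γ, μ {g} * (wdist μ n (g⁻¹ * z) * ENNReal.ofReal (gd z)) :=
          ENNReal.tsum_comm
      _ = ∑' z : Γ, (∑' g : Γ, μ {g} * wdist μ n (g⁻¹ * z)) * ENNReal.ofReal (gd z) := by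
          refine tsum_congr fun z => ?_
          rw [← ENNReal.tsum_mul_right]
          exact tsum_congr fun g => (mul_assoc _ _ _).symm
      _ = Iv (n + 1) := by
          refine tsum_congr fun z => ?_
          rfl
  have hJfin : ∀ g : Γ, μ {g⁻¹} ≠ 0 → Jv g ≠ ∞ := by
    intro g hg
    have hb : Jv g ≤ (μ {g⁻¹})⁻¹ * Iv (n + 1) := by
      have hstep : ∀ y : Γ, wdist μ n y ≤ (μ {g⁻¹})⁻¹ * wdist μ (n + 1) (g⁻¹ * y) := by
        intro y
        calc wdist μ n y = (μ {g⁻¹})⁻¹ * (μ {g⁻¹} * wdist μ n y) := by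
              rw [← mul_assoc, ENNReal.inv_mul_cancel hg (measure_ne_top μ _), one_mul]
          _ ≤ (μ {g⁻¹})⁻¹ * wdist μ (n + 1) (g⁻¹ * y) :=
              mul_le_mul_right (hstep_ge g y) _
      calc Jv g ≤ ∑' y : Γ, ((μ {g⁻¹})⁻¹ * wdist μ (n + 1) (g⁻¹ * y)) * ENNReal.ofReal (gd (g⁻¹ * y)) :=
            ENNReal.tsum_le_tsum fun y => mul_le_mul_left (hstep y) _
        _ = (μ {g⁻¹})⁻¹ * ∑' y : Γ, wdist μ (n + 1) (g⁻¹ * y) * ENNReal.ofReal (gd (g⁻¹ * y)) := by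
            rw [← ENNReal.tsum_mul_left]
            exact tsum_congr fun y => mul_assoc _ _ _
        _ = (μ {g⁻¹})⁻¹ * Iv (n + 1) := by
            congr 1
            exact (Equiv.mulLeft g⁻¹).tsum_eq
              (fun z => wdist μ (n + 1) z * ENNReal.ofReal (gd z))
    exact ne_top_of_le_ne_top
      (ENNReal.mul_ne_top (ENNReal.inv_ne_top.2 hg) (hIvfin (n + 1))) hb
  have hTg : ∀ g : Γ, μ {g⁻¹} ≠ 0 →
      ∫ ω, - Real.log (martinK P X g (pw X 0 n ω)) ∂P = (Jv g).toReal - (Iv n).toReal := by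
    intro g hg
    have intJ := int_pw hmeas hiid hlaw n (fun y => gd (g⁻¹ * y)) (fun y => h0 _) (hJfin g hg)
    have hae : ∀ᵐ ω ∂P, - Real.log (martinK P X g (pw X 0 n ω))
        = gd (g⁻¹ * pw X 0 n ω) - gd (pw X 0 n ω) :=
      (ae_wdist_pos hmeas hiid hlaw n).mono fun ω hω =>
        martin_key hmeas hiid hlaw htrans n g (pw X 0 n ω) hg hω
    rw [integral_congr_ae hae, integral_sub intJ.1 (hint n).1, intJ.2, (hint n).2]
  have ha_sum : ∑' g : Γ, μ {g⁻¹} = 1 := by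
    have e : (∑' g : Γ, μ {g⁻¹}) = ∑' g : Γ, μ {g} :=
      (Equiv.inv Γ).tsum_eq fun g : Γ => μ {g}
    rw [e, tsum_meas_singleton μ]
  have hterm : ∀ g : Γ, (μ {g⁻¹}).toReal * ∫ ω, - Real.log (martinK P X g (pw X 0 n ω)) ∂P
      = (μ {g⁻¹} * Jv g).toReal - (μ {g⁻¹}).toReal * (Iv n).toReal := by
    intro g
    rcases eq_or_ne (μ {g⁻¹}) 0 with h | h
    · rw [h]; simp
    · rw [hTg g h, ENNReal.toReal_mul]; ring
  have S1 : Summable fun g : Γ => (μ {g⁻¹} * Jv g).toReal :=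
    ENNReal.summable_toReal (by rw [hsumJ]; exact hIvfin (n + 1))
  have S2 : Summable fun g : Γ => (μ {g⁻¹}).toReal * (Iv n).toReal := by
    refine Summable.mul_right _ ?_
    exact ENNReal.summable_toReal (by rw [ha_sum]; exact ENNReal.one_ne_top)
  have hS1 : ∑' g : Γ, (μ {g⁻¹} * Jv g).toReal = (Iv (n + 1)).toReal := by
    rw [← ENNReal.tsum_toReal_eq (f := fun g : Γ => μ {g⁻¹} * Jv g) (fun g =>
      ne_top_of_le_ne_top (by rw [hsumJ]; exact hIvfin (n + 1))
        (ENNReal.le_tsum (f := fun g : Γ => μ {g⁻¹} * Jv g) g)), hsumJ]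
  have hS2 : ∑' g : Γ, (μ {g⁻¹}).toReal * (Iv n).toReal = (Iv n).toReal := by
    rw [tsum_mul_right, ← ENNReal.tsum_toReal_eq (f := fun g : Γ => μ {g⁻¹})
      (fun g => measure_ne_top μ _), ha_sum, ENNReal.toReal_one, one_mul]
  calc ∫ ω, (greenDist P X 1 (walk 1 X (n + 1) ω) - greenDist P X 1 (walk 1 X n ω)) ∂P
      = ∫ ω, (gd (pw X 0 (n + 1) ω) - gd (pw X 0 n ω)) ∂P := by
        simp only [walk_one_pw, hgd]
    _ = (Iv (n + 1)).toReal - (Iv n).toReal := by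
        rw [integral_sub (hint (n + 1)).1 (hint n).1, (hint (n + 1)).2, (hint n).2]
    _ = ∑' g : Γ, ((μ {g⁻¹} * Jv g).toReal - (μ {g⁻¹}).toReal * (Iv n).toReal) := by
        rw [S1.tsum_sub S2, hS1, hS2]
    _ = ∑' g : Γ, (μ {g⁻¹}).toReal * ∫ ω, - Real.log (martinK P X g (pw X 0 n ω)) ∂P :=
        (tsum_congr hterm).symm
    _ = ∑' g : Γ, (μ {g⁻¹}).toReal * ∫ ω, - Real.log (martinK P X g (walk 1 X n ω)) ∂P := by
        refine tsum_congr fun g => ?_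
        congr 1
        refine integral_congr_ae (ae_of_all _ fun ω => ?_)
        simp only [walk_one_pw]

end RW

/-- for every `n`,
`E[d_G(e,Z_{n+1}) - d_G(e,Z_n)] = Σ_x μ(x⁻¹) E[-ln K(x, Z_n)]`. -/
theorem greenDist_increment_eq_martin_kernel_integral
    [Group Γ] [Countable Γ] [MeasurableSpace Γ] [MeasurableSingletonClass Γ]
    [MeasurableSpace Ω] (P : Measure Ω) [IsProbabilityMeasure P]
    (μ : Measure Γ) [IsProbabilityMeasure μ]
    (X : ℕ → Ω → Γ) (hmeas : ∀ k, Measurable (X k))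
    (hiid : iIndepFun X P)
    (hlaw : ∀ k, Measure.map (X k) P = μ)
    (hgen : Subgroup.closure {g : Γ | μ {g} ≠ 0} = ⊤)
    (htrans : P {ω | ∃ n ≥ 1, walk 1 X n ω = 1} < 1)
    (hent : Summable fun g : Γ => Real.negMulLog (μ {g}).toReal) :
    ∀ n : ℕ,
      ∫ ω, (greenDist P X 1 (walk 1 X (n + 1) ω)
              - greenDist P X 1 (walk 1 X n ω)) ∂P
        = ∑' g : Γ, (μ {g⁻¹}).toReal *
            ∫ ω, - Real.log (martinK P X g (walk 1 X n ω)) ∂P :=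
  main_statement hmeas hiid hlaw htrans hent
end
end
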